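/- If G is an almost bipartite graph that is not a König-Egerváry graph, with unique odd cycle C, then V(C) ∪ N[diadem(G)] = V(G); consequently {V(C), N[diadem(G)]} is a partition of V(G). -/

import Mathlib

namespace AlmostBipartite

variable {V : Type*}

/-- The (open) neighborhood `N(X)` of a set of vertices: all vertices having a neighbor in `X`. -/
def nbhd (G : SimpleGraph V) (X : Set V) : Set V := {v | ∃ x ∈ X, G.Adj v x}

/-- The closed neighborhood `N[X] = X ∪ N(X)`. -/
def closedNbhd (G : SimpleGraph V) (X : Set V) : Set V := X ∪ nbhd G X

/-- A set of vertices is independent: no two of its vertices are adjacent. -/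
def IsIndepSet (G : SimpleGraph V) (S : Set V) : Prop :=
  ∀ ⦃a⦄, a ∈ S → ∀ ⦃b⦄, b ∈ S → ¬G.Adj a b

/-- The difference `d(X) = |X| - |N(X)|`. -/
noncomputable def diffOf (G : SimpleGraph V) (X : Set V) : ℤ :=
  (X.ncard : ℤ) - ((nbhd G X).ncard : ℤ)

/-- The critical difference `d(G)`: maximum of `d(I)` over independent sets `I`. -/
noncomputable def critDiff (G : SimpleGraph V) : ℤ :=
  sSup (diffOf G '' {S | IsIndepSet G S})

/-- A critical independent set: an independent set `A` with `d(A) = d(G)`. -/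
def IsCritIndep (G : SimpleGraph V) (A : Set V) : Prop :=
  IsIndepSet G A ∧ diffOf G A = critDiff G

/-- `diadem G` is the union of all critical independent sets of `G`. -/
def diadem (G : SimpleGraph V) : Set V := ⋃₀ {A | IsCritIndep G A}

/-- A maximum critical independent set: a critical independent set of maximum cardinality. -/
def IsMaxCritIndep (G : SimpleGraph V) (A : Set V) : Prop :=
  IsCritIndep G A ∧ ∀ B : Set V, IsCritIndep G B → B.ncard ≤ A.ncard

/-- `nucleus G` is the intersection of all maximum critical independent sets of `G`. -/
def nucleus (G : SimpleGraph V) : Set V := ⋂₀ {A | IsMaxCritIndep G A}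

/-- The independence number `α(G)`. -/
noncomputable def indepNum (G : SimpleGraph V) : ℕ :=
  sSup {n | ∃ S : Set V, IsIndepSet G S ∧ S.ncard = n}

/-- The critical independence number `α'(G)`: cardinality of a maximum critical independent set. -/
noncomputable def critIndepNum (G : SimpleGraph V) : ℕ :=
  sSup {n | ∃ S : Set V, IsCritIndep G S ∧ S.ncard = n}

/-- A maximum independent set. -/
def IsMaxIndep (G : SimpleGraph V) (S : Set V) : Prop :=
  IsIndepSet G S ∧ S.ncard = indepNum G

/-- `corona G` is the union of all maximum independent sets of `G`. -/
def corona (G : SimpleGraph V) : Set V := ⋃₀ {S | IsMaxIndep G S}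

/-- `core G` is the intersection of all maximum independent sets of `G`. -/
def core (G : SimpleGraph V) : Set V := ⋂₀ {S | IsMaxIndep G S}

/-- The matching number `μ(G)`: maximum size of a matching in `G`. -/
noncomputable def matchNum (G : SimpleGraph V) : ℕ :=
  sSup {n | ∃ M : SimpleGraph.Subgraph G, M.IsMatching ∧ M.edgeSet.ncard = n}

/-- `G` is a König-Egerváry graph if `α(G) + μ(G) = n(G)`. -/
def KonigEgervary (G : SimpleGraph V) : Prop :=
  indepNum G + matchNum G = Nat.card V

/-- A closed walk which is an odd cycle. -/
def IsOddCycleWalk (G : SimpleGraph V) {u : V} (c : G.Walk u u) : Prop :=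
  c.IsCycle ∧ Odd c.length

/-- `c` is the unique odd cycle of `G`: it is an odd cycle, and every odd cycle of `G`
has the same edge set as `c`.  A graph admitting such `c` is almost bipartite. -/
def IsUniqueOddCycle (G : SimpleGraph V) {u : V} (c : G.Walk u u) : Prop :=
  IsOddCycleWalk G c ∧
    ∀ (w : V) (c' : G.Walk w w), IsOddCycleWalk G c' →
      {e | e ∈ c'.edges} = {e | e ∈ c.edges}

/-- The vertex-deleted subgraph `G - v`. -/
def deleteVert (G : SimpleGraph V) (v : V) := G.induce {w | w ≠ v}

/-- `ϱ_v(G)`: the number of vertices `v` such that `G - v` is a König-Egerváry graph. -/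
noncomputable def rhoV (G : SimpleGraph V) : ℕ :=
  {v : V | KonigEgervary (deleteVert G v)}.ncard

end AlmostBipartite

open AlmostBipartite

namespace ABPAux
open SimpleGraph hiding IsIndepSet indepNum
set_option linter.unusedSectionVars false
variable {V : Type*}


lemma exists_edge_of_mem_support {G : SimpleGraph V} {a b : V} (p : G.Walk a b) (hnil : ¬ p.Nil) :
    ∀ v ∈ p.support, ∃ e ∈ p.edges, v ∈ e := by
  induction p with
  | nil => simp at hnil
  | @cons a x b h q ih =>
    intro v hv
    rw [Walk.support_cons] at hv
    rcases List.mem_cons.mp hv with rfl | hv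
    · exact ⟨s(v, x), by simp, by simp⟩
    · by_cases hvx : v = x
      · exact ⟨s(a, x), by simp, by simp [hvx]⟩
      · have hqnil : ¬ q.Nil := by
          intro hq
          rw [Walk.nil_iff_support_eq] at hq
          rw [hq] at hv
          simp at hv
          exact hvx hv
        obtain ⟨e, he, hve⟩ := ih hqnil v hv
        exact ⟨e, by simp [he], hve⟩

lemma support_subset_of_edges_subset {G : SimpleGraph V} {a b : V} {p : G.Walk a a}
    {q : G.Walk b b} (hp : ¬ p.Nil) (h : ∀ e ∈ p.edges, e ∈ q.edges) :
    ∀ v ∈ p.support, v ∈ q.support := by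
  intro v hv
  obtain ⟨e, he, hve⟩ := exists_edge_of_mem_support p hp v hv
  have heq : e ∈ q.edges := h e he
  induction e with
  | h x y =>
    rcases Sym2.mem_iff.mp hve with rfl | rfl
    · exact q.fst_mem_support_of_mem_edges heq
    · exact q.snd_mem_support_of_mem_edges heq

lemma head_edge_of_path {G : SimpleGraph V} {b w : V} (q : G.Walk b w)
    (hnd : q.support.Nodup) {e : Sym2 V} (he : e ∈ q.edges) (hb : b ∈ e) :
    ∃ (x : V) (h : G.Adj b x) (q' : G.Walk x w), q = Walk.cons h q' ∧ e = s(b, x) := by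
  cases q with
  | nil => simp at he
  | @cons b x w h q' =>
    rw [Walk.edges_cons] at he
    rcases List.mem_cons.mp he with rfl | he'
    · exact ⟨x, h, q', rfl, rfl⟩
    · exfalso
      have hbs : b ∈ q'.support := by
        induction e with
        | h c d =>
          rcases Sym2.mem_iff.mp hb with rfl | rfl
          · exact q'.fst_mem_support_of_mem_edges he'
          · exact q'.snd_mem_support_of_mem_edges he'
      rw [Walk.support_cons, List.nodup_cons] at hnd
      exact hnd.1 hbs

/-- An odd closed walk contains an odd cycle (with edges among its edges). -/
lemma odd_closed_walk_exists_odd_cycle {G : SimpleGraph V} :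
    ∀ (n : ℕ) {v : V} (p : G.Walk v v), p.length = n → Odd n →
      ∃ (u : V) (q : G.Walk u u), q.IsCycle ∧ Odd q.length ∧ ∀ e ∈ q.edges, e ∈ p.edges := by
  classical
  intro n
  induction n using Nat.strong_induction_on with
  | _ n IH =>
    intro v p hlen hodd
    obtain ⟨m, hm⟩ := hodd
    have hnnil : ¬ p.Nil := by
      intro h
      rw [Walk.nil_iff_length_eq] at h
      omega
    by_cases hnd : p.support.tail.Nodup
    · -- p is a cycle
      refine ⟨v, p, ?_, hlen ▸ ⟨m, hm⟩, fun e he => he⟩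
      rw [Walk.isCycle_def]
      refine ⟨?_, fun hn => hnnil (hn ▸ Walk.nil_nil), hnd⟩
      obtain ⟨x, hadj, q, rfl⟩ := Walk.not_nil_iff.mp hnnil
      have hqsup : q.support.Nodup := by simpa using hnd
      constructor
      rw [Walk.edges_cons, List.nodup_cons]
      refine ⟨?_, Walk.edges_nodup_of_support_nodup hqsup⟩
      intro hmem
      obtain ⟨y, hadj', q', heq, hedge⟩ := head_edge_of_path q hqsup hmem (by simp)
      have hvy : v = y := by
        have := Sym2.eq_iff.mp hedge
        rcases this with ⟨h1, h2⟩ | ⟨h1, h2⟩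
        · exact absurd h1 (G.ne_of_adj hadj)
        · exact h1.symm ▸ rfl
      subst hvy
      subst heq
      -- q' : G.Walk v v with support nodup must be nil
      have hq'path : q'.IsPath := Walk.IsPath.mk' (by
        rw [Walk.support_cons, List.nodup_cons] at hqsup
        exact hqsup.2)
      have : q' = Walk.nil := Subtype.ext_iff.mp (SimpleGraph.Path.loop_eq ⟨q', hq'path⟩)
      rw [this] at hlen
      simp [Walk.length_cons] at hlen
      omega
    · -- split at a repeated vertex
      obtain ⟨w, hwcount⟩ : ∃ w, 2 ≤ p.support.tail.count w := by
        by_contra hno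
        push_neg at hno
        exact hnd (List.nodup_iff_count_le_one.mpr (fun a => by have := hno a; omega))
      have hwtail : w ∈ p.support.tail := List.count_pos_iff.mp (by omega)
      have hw : w ∈ p.support := by
        rw [p.support_eq_cons]; exact List.mem_cons_of_mem _ hwtail
      set t := p.takeUntil w hw with ht
      set d := p.dropUntil w hw with hd
      have hspec : t.append d = p := p.take_spec hw
      have hcount_t : t.support.count w = 1 := p.count_support_takeUntil_eq_one hw
      have hsupp_p : p.support = t.support ++ d.support.tail := by
        rw [← hspec, Walk.support_append]
      have hcount_p : 2 ≤ p.support.count w := by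
        rw [p.support_eq_cons, List.count_cons]
        have : p.support.tail.count w ≥ 2 := hwcount
        omega
      have hcount_d : 1 ≤ d.support.tail.count w := by
        rw [hsupp_p, List.count_append] at hcount_p
        omega
      have hdnil : ¬ d.Nil := by
        intro h
        rw [Walk.nil_iff_support_eq] at h
        rw [h] at hcount_d
        simp at hcount_d
      obtain ⟨b, hdb, d₂, hdeq⟩ := Walk.not_nil_iff.mp hdnil
      have hwd₂ : w ∈ d₂.support := by
        have : d.support.tail = d₂.support := by rw [hdeq, Walk.support_cons, List.tail_cons]
        rw [this] at hcount_d
        exact List.count_pos_iff.mp (by omega)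
      set t₂ := d₂.takeUntil w hwd₂ with ht₂
      set r := d₂.dropUntil w hwd₂ with hr
      have hspec₂ : t₂.append r = d₂ := d₂.take_spec hwd₂
      -- the two closed walks
      set c₁ : G.Walk w w := Walk.cons hdb t₂ with hc₁
      set c₂ : G.Walk v v := t.append r with hc₂
      have hlen_sum : c₁.length + c₂.length = n := by
        have h1 : p.length = t.length + d.length := by rw [← hspec, Walk.length_append]
        have h2 : d.length = 1 + d₂.length := by rw [hdeq, Walk.length_cons]; omega
        have h3 : d₂.length = t₂.length + r.length := by rw [← hspec₂, Walk.length_append]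
        have h4 : c₁.length = 1 + t₂.length := by rw [hc₁, Walk.length_cons]; omega
        have h5 : c₂.length = t.length + r.length := by rw [hc₂, Walk.length_append]
        omega
      have hc₁pos : 1 ≤ c₁.length := by rw [hc₁, Walk.length_cons]; omega
      have hc₂pos : 1 ≤ c₂.length := by
        by_cases htnil : t.Nil
        · -- then v = w and t.length = 0, we must show r is not nil
          have hvw : v = w := by
            have : t.length = 0 := Walk.nil_iff_length_eq.mp htnil
            exact Walk.eq_of_length_eq_zero this
          have htsup : t.support = [v] := Walk.nil_iff_support_eq.mp htnil
          -- count in p.support: 1 + count in d.support.tail ≥ 3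
          have h3 : 3 ≤ p.support.count w := by
            rw [p.support_eq_cons, List.count_cons]
            simp [hvw]
            omega
          have hcd2 : 2 ≤ d₂.support.count w := by
            rw [hsupp_p, List.count_append, htsup] at h3
            have hco : List.count w [v] = 1 := by simp [hvw]
            have hdt : d.support.tail = d₂.support := by rw [hdeq, Walk.support_cons, List.tail_cons]
            rw [hdt, hco] at h3
            omega
          have hd₂split : d₂.support = t₂.support ++ r.support.tail := by
            rw [← hspec₂, Walk.support_append]
          have hcount_t₂ : t₂.support.count w = 1 := d₂.count_support_takeUntil_eq_one hwd₂
          have hrtail : 1 ≤ r.support.tail.count w := by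
            rw [hd₂split, List.count_append] at hcd2
            omega
          have hrnil : ¬ r.Nil := by
            intro h
            rw [Walk.nil_iff_support_eq] at h
            rw [h] at hrtail
            simp at hrtail
          have : r.length ≠ 0 := fun h => hrnil (Walk.nil_iff_length_eq.mpr h)
          rw [hc₂, Walk.length_append]
          omega
        · have : t.length ≠ 0 := fun h => htnil (Walk.nil_iff_length_eq.mpr h)
          rw [hc₂, Walk.length_append]
          omega
      -- edges of c₁ and c₂ are edges of p
      have hedges_d : ∀ e ∈ d.edges, e ∈ p.edges := by
        intro e he
        rw [← hspec, Walk.edges_append]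
        exact List.mem_append_right _ he
      have hedges_c₁ : ∀ e ∈ c₁.edges, e ∈ p.edges := by
        intro e he
        rw [hc₁, Walk.edges_cons] at he
        rcases List.mem_cons.mp he with rfl | he'
        · apply hedges_d; rw [hdeq, Walk.edges_cons]; exact List.mem_cons_self
        · apply hedges_d; rw [hdeq, Walk.edges_cons]
          exact List.mem_cons_of_mem _ (List.Subset.trans (d₂.edges_takeUntil_subset hwd₂)
            (fun _ h => h) he')
      have hedges_c₂ : ∀ e ∈ c₂.edges, e ∈ p.edges := by
        intro e he
        rw [hc₂, Walk.edges_append] at he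
        rcases List.mem_append.mp he with he' | he'
        · rw [← hspec, Walk.edges_append]
          exact List.mem_append_left _ he'
        · apply hedges_d; rw [hdeq, Walk.edges_cons]
          exact List.mem_cons_of_mem _ (d₂.edges_dropUntil_subset hwd₂ he')
      rcases Nat.even_or_odd c₁.length with hev | hodd'
      · -- c₂ is odd
        have hodd₂ : Odd c₂.length := by
          rcases hev with ⟨k, hk⟩
          refine ⟨m - k, by omega⟩
        obtain ⟨u', q, hq1, hq2, hq3⟩ := IH c₂.length (by omega) c₂ rfl hodd₂
        exact ⟨u', q, hq1, hq2, fun e he => hedges_c₂ e (hq3 e he)⟩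
      · obtain ⟨u', q, hq1, hq2, hq3⟩ := IH c₁.length (by omega) c₁ rfl hodd'
        exact ⟨u', q, hq1, hq2, fun e he => hedges_c₁ e (hq3 e he)⟩



-- RELBIP: no odd cycle within S → S splits into two independent sets
section Bipartition

variable {G : SimpleGraph V}

lemma no_odd_closed_walk {S : Set V}
    (h : ∀ (u : V) (q : G.Walk u u), q.IsCycle → Odd q.length → ¬ (∀ x ∈ q.support, x ∈ S)) :
    ∀ (u : V) (p : G.Walk u u), (∀ x ∈ p.support, x ∈ S) → ¬ Odd p.length := by
  intro u p hsupp hodd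
  obtain ⟨u', q, hq1, hq2, hq3⟩ := odd_closed_walk_exists_odd_cycle p.length p rfl hodd
  refine h u' q hq1 hq2 (fun x hx => hsupp x ?_)
  exact support_subset_of_edges_subset hq1.not_nil hq3 x hx

private def walkRel (G : SimpleGraph V) (S : Set V) (x y : V) : Prop :=
  x = y ∨ (x ∈ S ∧ y ∈ S ∧ ∃ p : G.Walk x y, ∀ a ∈ p.support, a ∈ S)

private lemma walkRel_equiv (S : Set V) : Equivalence (walkRel G S) := by
  constructor
  · intro x; exact Or.inl rfl
  · intro x y hxy
    rcases hxy with rfl | ⟨hx, hy, p, hp⟩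
    · exact Or.inl rfl
    · exact Or.inr ⟨hy, hx, p.reverse, fun a ha => hp a (by rwa [Walk.support_reverse, List.mem_reverse] at ha)⟩
  · intro x y z hxy hyz
    rcases hxy with rfl | ⟨hx, hy, p, hp⟩
    · exact hyz
    rcases hyz with rfl | ⟨hy', hz, q, hq⟩
    · exact Or.inr ⟨hx, hy, p, hp⟩
    · refine Or.inr ⟨hx, hz, p.append q, fun a ha => ?_⟩
      rcases (Walk.mem_support_append_iff p q).mp ha with h' | h'
      · exact hp a h'
      · exact hq a h'

lemma exists_bipartition (S : Set V)
    (h : ∀ (u : V) (q : G.Walk u u), q.IsCycle → Odd q.length → ¬ (∀ x ∈ q.support, x ∈ S)) :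
    ∃ S0 S1 : Set V, S0 ∪ S1 = S ∧ S0 ∩ S1 = ∅ ∧ IsIndepSet G S0 ∧ IsIndepSet G S1 := by
  classical
  have hW := no_odd_closed_walk h
  set st : Setoid V := ⟨walkRel G S, walkRel_equiv S⟩ with hst
  set rep : V → V := fun x => (Quotient.mk st x).out with hrep
  have hrel : ∀ x, walkRel G S (rep x) x := fun x => Quotient.mk_out (s := st) x
  set S0 : Set V := {x | x ∈ S ∧ ∃ p : G.Walk (rep x) x, (∀ a ∈ p.support, a ∈ S) ∧ Even p.length}
    with hS0
  set S1 : Set V := S \ S0 with hS1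
  have hrepeq : ∀ x y, x ∈ S → y ∈ S → G.Adj x y → rep x = rep y := by
    intro x y hx hy hadj
    have : walkRel G S x y := Or.inr ⟨hx, hy, Walk.cons hadj Walk.nil, by
      intro a ha
      rw [Walk.support_cons, Walk.support_nil] at ha
      rcases List.mem_cons.mp ha with rfl | ha
      · exact hx
      · simp at ha; subst ha; exact hy⟩
    have heq : (Quotient.mk st x) = Quotient.mk st y := Quotient.sound this
    exact congrArg Quotient.out heq
  refine ⟨S0, S1, ?_, ?_, ?_, ?_⟩
  · rw [hS1]; exact Set.union_diff_cancel (fun x hx => hx.1)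
  · rw [hS1]; ext x; simp only [Set.mem_inter_iff, Set.mem_diff, Set.mem_empty_iff_false, iff_false]
    rintro ⟨h1, _, h2⟩; exact h2 h1
  · -- S0 independent
    intro x hx y hy hadj
    obtain ⟨hxS, px, hpx, hpxe⟩ := hx
    obtain ⟨hyS, py, hpy, hpye⟩ := hy
    have hre : rep x = rep y := hrepeq x y hxS hyS hadj
    -- closed odd walk at rep x
    set wk : G.Walk (rep x) (rep x) :=
      px.append (Walk.cons hadj (py.reverse.copy rfl hre.symm)) with hwk
    refine hW _ wk ?_ ?_
    · intro a ha
      rcases (Walk.mem_support_append_iff _ _).mp ha with h' | h'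
      · exact hpx a h'
      · rw [Walk.support_cons] at h'
        rcases List.mem_cons.mp h' with rfl | h'
        · exact hxS
        · rw [Walk.support_copy, Walk.support_reverse, List.mem_reverse] at h'
          exact hpy a h'
    · rw [hwk, Walk.length_append, Walk.length_cons, Walk.length_copy, Walk.length_reverse]
      rcases hpxe with ⟨k, hk⟩
      rcases hpye with ⟨l, hl⟩
      exact ⟨k + l, by omega⟩
  · -- S1 independent
    intro x hx y hy hadj
    obtain ⟨hxS, hxn⟩ := hx
    obtain ⟨hyS, hyn⟩ := hy
    -- get walks from rep, they must be odd
    have hgetwalk : ∀ z, z ∈ S → z ∉ S0 → ∃ p : G.Walk (rep z) z,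
        (∀ a ∈ p.support, a ∈ S) ∧ Odd p.length := by
      intro z hz hzn
      rcases hrel z with heq | ⟨_, _, p, hp⟩
      · exfalso
        refine hzn ⟨hz, Walk.nil.copy heq.symm rfl, ?_, by simp⟩
        intro a ha
        rw [Walk.support_copy, Walk.support_nil] at ha
        simp at ha; subst ha; exact hz
      · refine ⟨p, hp, ?_⟩
        rcases Nat.even_or_odd p.length with hev | hodd
        · exact absurd ⟨hz, p, hp, hev⟩ hzn
        · exact hodd
    obtain ⟨px, hpx, hpxo⟩ := hgetwalk x hxS hxn
    obtain ⟨py, hpy, hpyo⟩ := hgetwalk y hyS hyn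
    have hre : rep x = rep y := hrepeq x y hxS hyS hadj
    set wk : G.Walk (rep x) (rep x) :=
      px.append (Walk.cons hadj (py.reverse.copy rfl hre.symm)) with hwk
    refine hW _ wk ?_ ?_
    · intro a ha
      rcases (Walk.mem_support_append_iff _ _).mp ha with h' | h'
      · exact hpx a h'
      · rw [Walk.support_cons] at h'
        rcases List.mem_cons.mp h' with rfl | h'
        · exact hxS
        · rw [Walk.support_copy, Walk.support_reverse, List.mem_reverse] at h'
          exact hpy a h'
    · rw [hwk, Walk.length_append, Walk.length_cons, Walk.length_copy, Walk.length_reverse]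
      rcases hpxo with ⟨k, hk⟩
      rcases hpyo with ⟨l, hl⟩
      exact ⟨k + l + 1, by omega⟩

end Bipartition

section Counting

variable [Fintype V] {G : SimpleGraph V}

lemma mem_nbhd {X : Set V} {v : V} : v ∈ nbhd G X ↔ ∃ x ∈ X, G.Adj v x := Iff.rfl

lemma nbhd_mono {X Y : Set V} (h : X ⊆ Y) : nbhd G X ⊆ nbhd G Y := by
  rintro v ⟨x, hx, hadj⟩; exact ⟨x, h hx, hadj⟩

lemma nbhd_empty : nbhd G (∅ : Set V) = ∅ := by
  ext v; simp [nbhd]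

lemma nbhd_union {X Y : Set V} : nbhd G (X ∪ Y) = nbhd G X ∪ nbhd G Y := by
  ext v
  constructor
  · rintro ⟨x, hx | hx, hadj⟩
    · exact Or.inl ⟨x, hx, hadj⟩
    · exact Or.inr ⟨x, hx, hadj⟩
  · rintro (⟨x, hx, hadj⟩ | ⟨x, hx, hadj⟩)
    · exact ⟨x, Or.inl hx, hadj⟩
    · exact ⟨x, Or.inr hx, hadj⟩

lemma indep_inter_nbhd {A : Set V} (hA : IsIndepSet G A) : A ∩ nbhd G A = ∅ := by
  ext v
  simp only [Set.mem_inter_iff, Set.mem_empty_iff_false, iff_false]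
  rintro ⟨hv, x, hx, hadj⟩
  exact hA hv hx hadj

lemma ncard_le_cardV (S : Set V) : S.ncard ≤ Fintype.card V := by
  have := Set.ncard_le_ncard (Set.subset_univ S) (Set.toFinite _)
  rwa [Set.ncard_univ, Nat.card_eq_fintype_card] at this

lemma le_critDiff {S : Set V} (h : IsIndepSet G S) : diffOf G S ≤ critDiff G := by
  apply le_csSup
  · exact Set.Finite.bddAbove ((Set.toFinite _).image _)
  · exact ⟨S, h, rfl⟩

lemma indep_empty : IsIndepSet G (∅ : Set V) := fun a ha => absurd ha (Set.notMem_empty a)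

lemma exists_max_crit : ∃ A : Set V, IsCritIndep G A ∧
    ∀ B : Set V, IsCritIndep G B → B.ncard ≤ A.ncard := by
  have h1 : ∃ A₀ : Set V, IsIndepSet G A₀ ∧ diffOf G A₀ = critDiff G := by
    have hne : (diffOf G '' {S | IsIndepSet G S}).Nonempty := ⟨diffOf G ∅, ∅, indep_empty, rfl⟩
    have hfin : (diffOf G '' {S | IsIndepSet G S}).Finite := (Set.toFinite _).image _
    obtain ⟨S, hS, hdiff⟩ := hne.csSup_mem hfin
    exact ⟨S, hS, hdiff⟩
  obtain ⟨A₀, hA₀, hd₀⟩ := h1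
  set N : Set ℕ := {n | ∃ A : Set V, IsCritIndep G A ∧ A.ncard = n} with hN
  have hNne : N.Nonempty := ⟨A₀.ncard, A₀, ⟨hA₀, hd₀⟩, rfl⟩
  have hNbdd : BddAbove N := by
    refine ⟨Fintype.card V, ?_⟩
    rintro n ⟨A, _, rfl⟩
    exact ncard_le_cardV A
  obtain ⟨A, hA, hcard⟩ := Nat.sSup_mem hNne hNbdd
  exact ⟨A, hA, fun B hB => hcard ▸ le_csSup hNbdd ⟨B, hB, rfl⟩⟩

lemma indepNum_lower {S : Set V} (h : IsIndepSet G S) : S.ncard ≤ indepNum G := by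
  apply le_csSup
  · exact ⟨Fintype.card V, by rintro n ⟨S, _, rfl⟩; exact ncard_le_cardV S⟩
  · exact ⟨S, h, rfl⟩

lemma exists_max_indep : ∃ S : Set V, IsIndepSet G S ∧ S.ncard = indepNum G := by
  have hne : {n | ∃ S : Set V, IsIndepSet G S ∧ S.ncard = n}.Nonempty :=
    ⟨(∅ : Set V).ncard, ∅, indep_empty, rfl⟩
  have hbdd : BddAbove {n | ∃ S : Set V, IsIndepSet G S ∧ S.ncard = n} :=
    ⟨Fintype.card V, by rintro n ⟨S, _, rfl⟩; exact ncard_le_cardV S⟩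
  obtain ⟨S, hS, hcard⟩ := Nat.sSup_mem hne hbdd
  exact ⟨S, hS, hcard⟩

lemma ncard_le_cardSym2 (S : Set (Sym2 V)) : S.ncard ≤ Nat.card (Sym2 V) := by
  have := Set.ncard_le_ncard (Set.subset_univ S) (Set.toFinite _)
  rwa [Set.ncard_univ] at this

lemma matchNum_lower {M : SimpleGraph.Subgraph G} (h : M.IsMatching) :
    M.edgeSet.ncard ≤ matchNum G := by
  apply le_csSup
  · exact ⟨Nat.card (Sym2 V), by rintro n ⟨M, _, rfl⟩; exact ncard_le_cardSym2 _⟩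
  · exact ⟨M, h, rfl⟩

lemma exists_max_matching : ∃ M : SimpleGraph.Subgraph G, M.IsMatching ∧
    M.edgeSet.ncard = matchNum G := by
  have hne : {n | ∃ M : SimpleGraph.Subgraph G, M.IsMatching ∧ M.edgeSet.ncard = n}.Nonempty := by
    refine ⟨(⊥ : SimpleGraph.Subgraph G).edgeSet.ncard, ⊥, ?_, rfl⟩
    intro v hv
    simp [SimpleGraph.Subgraph.verts_bot] at hv
  have hbdd : BddAbove {n | ∃ M : SimpleGraph.Subgraph G, M.IsMatching ∧ M.edgeSet.ncard = n} :=
    ⟨Nat.card (Sym2 V), by rintro n ⟨M, _, rfl⟩; exact ncard_le_cardSym2 _⟩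
  obtain ⟨M, hM, hcard⟩ := Nat.sSup_mem hne hbdd
  exact ⟨M, hM, hcard⟩

/-- the easy Gallai-type bound: `α + μ ≤ n`. -/
lemma alpha_add_mu_le : indepNum G + matchNum G ≤ Fintype.card V := by
  classical
  obtain ⟨J, hJ, hJcard⟩ := exists_max_indep (G := G)
  obtain ⟨M, hM, hMcard⟩ := exists_max_matching (G := G)
  -- each edge of M has an endpoint outside J
  have key : ∀ e ∈ M.edgeSet, ∃ v, v ∈ e ∧ v ∉ J := by
    intro e he
    induction e with
    | h x y =>
      have hadj : M.Adj x y := SimpleGraph.Subgraph.mem_edgeSet.mp he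
      by_cases hx : x ∈ J
      · by_cases hy : y ∈ J
        · exact absurd (M.adj_sub hadj) (hJ hx hy)
        · exact ⟨y, by simp, hy⟩
      · exact ⟨x, by simp, hx⟩
  have hex : ∀ e : Sym2 V, ∃ v, v ∈ e := fun e => e.inductionOn (fun x y => ⟨x, by simp⟩)
  set f : Sym2 V → V := fun e => if h : ∃ v, v ∈ e ∧ v ∉ J then h.choose else (hex e).choose
  have hf : ∀ e ∈ M.edgeSet, f e ∈ e ∧ f e ∉ J := by
    intro e he
    have h := key e he
    simp only [f, dif_pos h]
    exact h.choose_spec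
  have huniq : ∀ v, ∀ e₁ ∈ M.edgeSet, ∀ e₂ ∈ M.edgeSet, v ∈ e₁ → v ∈ e₂ → e₁ = e₂ := by
    intro v e₁ he₁ e₂ he₂ hv₁ hv₂
    have h₁ : M.Adj v (Sym2.Mem.other hv₁) := SimpleGraph.Subgraph.mem_edgeSet.mp
      (by rw [Sym2.other_spec hv₁]; exact he₁)
    have h₂ : M.Adj v (Sym2.Mem.other hv₂) := SimpleGraph.Subgraph.mem_edgeSet.mp
      (by rw [Sym2.other_spec hv₂]; exact he₂)
    obtain ⟨w, _, hwuniq⟩ := hM (M.edge_vert h₁)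
    rw [← Sym2.other_spec hv₁, ← Sym2.other_spec hv₂, hwuniq _ h₁, hwuniq _ h₂]
  have hinj : Set.InjOn f M.edgeSet := by
    intro e₁ he₁ e₂ he₂ hfe
    exact huniq (f e₁) e₁ he₁ e₂ he₂ (hf e₁ he₁).1 (hfe ▸ (hf e₂ he₂).1)
  have himg : f '' M.edgeSet ⊆ Set.univ \ J := by
    rintro v ⟨e, he, rfl⟩
    exact ⟨Set.mem_univ _, (hf e he).2⟩
  have hcount : M.edgeSet.ncard ≤ Fintype.card V - J.ncard := by
    have h1 : M.edgeSet.ncard = (f '' M.edgeSet).ncard :=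
      (Set.ncard_image_of_injOn hinj).symm
    have h2 : (f '' M.edgeSet).ncard ≤ (Set.univ \ J).ncard :=
      Set.ncard_le_ncard himg (Set.toFinite _)
    have h3 : (Set.univ \ J).ncard = Fintype.card V - J.ncard := by
      rw [Set.ncard_diff (Set.subset_univ J) (Set.toFinite _), Set.ncard_univ,
        Nat.card_eq_fintype_card]
    omega
  have := ncard_le_cardV J
  omega

/-- build a matching from an injective family of disjoint edges. -/
lemma matchNum_ge {ι : Type*} [Fintype ι] (f g : ι → V) (hadj : ∀ i, G.Adj (f i) (g i))
    (hinj : Function.Injective (Sum.elim f g : ι ⊕ ι → V)) :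
    Fintype.card ι ≤ matchNum G := by
  classical
  have hfg : ∀ i j, f i ≠ g j := fun i j h => by
    have := hinj (a₁ := Sum.inl i) (a₂ := Sum.inr j) h
    simp at this
  have hfinj : Function.Injective f := fun i j h => by
    have := hinj (a₁ := Sum.inl i) (a₂ := Sum.inl j) h
    simpa using this
  have hginj : Function.Injective g := fun i j h => by
    have := hinj (a₁ := Sum.inr i) (a₂ := Sum.inr j) h
    simpa using this
  set M : SimpleGraph.Subgraph G := {
    verts := Set.range f ∪ Set.range g
    Adj := fun x y => ∃ i, (x = f i ∧ y = g i) ∨ (x = g i ∧ y = f i)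
    adj_sub := by
      rintro x y ⟨i, ⟨rfl, rfl⟩ | ⟨rfl, rfl⟩⟩
      · exact hadj i
      · exact (hadj i).symm
    edge_vert := by
      rintro x y ⟨i, ⟨rfl, rfl⟩ | ⟨rfl, rfl⟩⟩
      · exact Or.inl ⟨i, rfl⟩
      · exact Or.inr ⟨i, rfl⟩
    symm := by
      constructor
      rintro x y ⟨i, ⟨rfl, rfl⟩ | ⟨rfl, rfl⟩⟩
      · exact ⟨i, Or.inr ⟨rfl, rfl⟩⟩
      · exact ⟨i, Or.inl ⟨rfl, rfl⟩⟩ } with hMdef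
  have hmatch : M.IsMatching := by
    rintro v (⟨i, rfl⟩ | ⟨i, rfl⟩)
    · refine ⟨g i, ⟨i, Or.inl ⟨rfl, rfl⟩⟩, ?_⟩
      rintro y ⟨j, ⟨hj1, rfl⟩ | ⟨hj1, rfl⟩⟩
      · rw [hfinj hj1]
      · exact absurd hj1 (hfg i j)
    · refine ⟨f i, ⟨i, Or.inr ⟨rfl, rfl⟩⟩, ?_⟩
      rintro y ⟨j, ⟨hj1, rfl⟩ | ⟨hj1, rfl⟩⟩
      · exact absurd hj1.symm (hfg j i)
      · rw [hginj hj1]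
  have hedge : M.edgeSet = (fun i => s(f i, g i)) '' Set.univ := by
    ext e
    induction e with
    | h x y =>
      simp only [SimpleGraph.Subgraph.mem_edgeSet]
      constructor
      · rintro ⟨i, ⟨rfl, rfl⟩ | ⟨rfl, rfl⟩⟩
        · exact ⟨i, Set.mem_univ _, rfl⟩
        · exact ⟨i, Set.mem_univ _, Sym2.eq_swap⟩
      · rintro ⟨i, _, hi⟩
        rw [Sym2.eq_iff] at hi
        rcases hi with ⟨rfl, rfl⟩ | ⟨rfl, rfl⟩
        · exact ⟨i, Or.inl ⟨rfl, rfl⟩⟩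
        · exact ⟨i, Or.inr ⟨rfl, rfl⟩⟩
  have hecard : M.edgeSet.ncard = Fintype.card ι := by
    rw [hedge]
    rw [Set.ncard_image_of_injective _ (fun i j hij => ?_)]
    · rw [Set.ncard_univ, Nat.card_eq_fintype_card]
    · rw [Sym2.eq_iff] at hij
      rcases hij with ⟨h1, _⟩ | ⟨h1, _⟩
      · exact hfinj h1
      · exact absurd h1 (hfg i j)
  rw [← hecard]
  exact matchNum_lower hmatch

end Counting

section HallApps

variable [Fintype V] {G : SimpleGraph V}

/-- Hall matching from `N(A)` into `A` for a critical independent set `A`. -/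
lemma crit_hall {A : Set V} (hA : IsCritIndep G A) :
    ∃ φ : V → V, Set.InjOn φ (nbhd G A) ∧ ∀ y ∈ nbhd G A, φ y ∈ A ∧ G.Adj y (φ y) := by
  classical
  set t : ↥(nbhd G A) → Finset V := fun y => (Set.toFinite (A ∩ {a | G.Adj ↑y a})).toFinset with ht
  have hallcond : ∀ s : Finset ↥(nbhd G A), s.card ≤ (s.biUnion t).card := by
    intro s
    set X : Set V := Subtype.val '' (↑s : Set ↥(nbhd G A)) with hX
    have hXsub : X ⊆ nbhd G A := by rintro v ⟨y, _, rfl⟩; exact y.2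
    have hXcard : X.ncard = s.card := by
      rw [hX, Set.ncard_image_of_injective _ Subtype.val_injective, Set.ncard_coe_finset]
    have hbi : ↑(s.biUnion t) = A ∩ nbhd G X := by
      ext a
      simp only [Finset.coe_biUnion, Set.mem_iUnion, Finset.mem_coe, Set.Finite.mem_toFinset,
        Set.mem_inter_iff, Set.mem_setOf_eq, ht]
      constructor
      · rintro ⟨y, hy, ha, hadj⟩
        exact ⟨ha, ↑y, ⟨y, hy, rfl⟩, hadj.symm⟩
      · rintro ⟨ha, x, ⟨y, hy, rfl⟩, hadj⟩
        exact ⟨y, hy, ha, hadj.symm⟩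
    have hbicard : (s.biUnion t).card = (A ∩ nbhd G X).ncard := by
      rw [← hbi, Set.ncard_coe_finset]
    -- criticality computation
    set A' : Set V := A \ nbhd G X with hA'
    have hA'indep : IsIndepSet G A' := fun a ha b hb => hA.1 ha.1 hb.1
    have hnsub : nbhd G A' ⊆ nbhd G A \ X := by
      rintro z ⟨a, ha, hadj⟩
      refine ⟨⟨a, ha.1, hadj⟩, fun hzX => ?_⟩
      exact ha.2 ⟨z, hzX, hadj.symm⟩
    have e1 : A'.ncard = A.ncard - (A ∩ nbhd G X).ncard := by
      rw [hA', show A \ nbhd G X = A \ (A ∩ nbhd G X) by rw [Set.diff_self_inter]]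
      exact Set.ncard_diff Set.inter_subset_left (Set.toFinite _)
    have e1' : (A ∩ nbhd G X).ncard ≤ A.ncard :=
      Set.ncard_le_ncard Set.inter_subset_left (Set.toFinite _)
    have e2 : (nbhd G A').ncard ≤ (nbhd G A).ncard - X.ncard := by
      have := Set.ncard_le_ncard hnsub (Set.toFinite _)
      rwa [Set.ncard_diff hXsub (Set.toFinite _)] at this
    have e2' : X.ncard ≤ (nbhd G A).ncard := Set.ncard_le_ncard hXsub (Set.toFinite _)
    have e3 : diffOf G A' ≤ diffOf G A := by
      rw [hA.2]
      exact le_critDiff hA'indep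
    simp only [diffOf] at e3
    rw [hXcard] at e2 e2'
    rw [hbicard]
    omega
  obtain ⟨f, hfinj, hft⟩ := (Finset.all_card_le_biUnion_card_iff_exists_injective t).mp hallcond
  refine ⟨fun v => if h : v ∈ nbhd G A then f ⟨v, h⟩ else v, ?_, ?_⟩
  · intro v1 h1 v2 h2 heq
    simp only [dif_pos h1, dif_pos h2] at heq
    exact Subtype.ext_iff.mp (hfinj heq)
  · intro y hy
    simp only [dif_pos hy]
    have := hft ⟨y, hy⟩
    rw [ht, Set.Finite.mem_toFinset] at this
    exact ⟨this.1, this.2⟩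

/-- König-type covering for a "bipartite" pair `(S, T)`:
an independent set `J` and a matching of combined size at least `|S| + |T|`. -/
lemma bip_cover (S T : Set V) (hdisj : Disjoint S T) (hS : IsIndepSet G S)
    (hT : IsIndepSet G T) :
    ∃ (J : Set V) (k : ℕ) (f g : Fin k → V),
      J ⊆ S ∪ T ∧ IsIndepSet G J ∧ (∀ i, G.Adj (f i) (g i)) ∧
      Function.Injective (Sum.elim f g : (Fin k) ⊕ (Fin k) → V) ∧
      (∀ i, f i ∈ S) ∧ (∀ i, g i ∈ T) ∧
      S.ncard + T.ncard ≤ J.ncard + k := by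
  classical
  -- maximal deficiency
  set dset : Set ℕ := {n | ∃ X, X ⊆ S ∧ X.ncard = (T ∩ nbhd G X).ncard + n} with hdset
  have hd0 : 0 ∈ dset := ⟨∅, Set.empty_subset _, by simp [nbhd_empty]⟩
  have hdbdd : BddAbove dset := by
    refine ⟨Fintype.card V, ?_⟩
    rintro n ⟨X, hXS, hX⟩
    have := ncard_le_cardV X
    omega
  set dd := sSup dset with hdd
  obtain ⟨Xs, hXsS, hXscard⟩ := Nat.sSup_mem ⟨0, hd0⟩ hdbdd
  have hdefbound : ∀ X, X ⊆ S → X.ncard ≤ (T ∩ nbhd G X).ncard + dd := by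
    intro X hXS
    by_cases h : X.ncard ≤ (T ∩ nbhd G X).ncard
    · omega
    · have : X.ncard - (T ∩ nbhd G X).ncard ∈ dset := ⟨X, hXS, by omega⟩
      have := le_csSup hdbdd this
      omega
  -- Hall with dummies
  set t : ↥S → Finset (V ⊕ Fin dd) := fun y =>
    ((Set.toFinite (T ∩ {a | G.Adj ↑y a})).toFinset.image Sum.inl) ∪
      (Finset.univ.image Sum.inr) with ht
  have hallcond : ∀ s : Finset ↥S, s.card ≤ (s.biUnion t).card := by
    intro s
    rcases s.eq_empty_or_nonempty with rfl | hsne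
    · simp
    set X : Set V := Subtype.val '' (↑s : Set ↥S) with hX
    have hXsub : X ⊆ S := by rintro v ⟨y, _, rfl⟩; exact y.2
    have hXcard : X.ncard = s.card := by
      rw [hX, Set.ncard_image_of_injective _ Subtype.val_injective, Set.ncard_coe_finset]
    have hbi : s.biUnion t =
        ((Set.toFinite (T ∩ nbhd G X)).toFinset.image Sum.inl) ∪ (Finset.univ.image Sum.inr) := by
      ext a
      simp only [Finset.mem_biUnion, Finset.mem_union, Finset.mem_image,
        Set.Finite.mem_toFinset, Set.mem_inter_iff, Set.mem_setOf_eq, Finset.mem_univ,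
        true_and, ht]
      constructor
      · rintro ⟨y, hy, ⟨v, ⟨hvT, hadj⟩, rfl⟩ | ⟨d, rfl⟩⟩
        · exact Or.inl ⟨v, ⟨hvT, ⟨↑y, ⟨y, hy, rfl⟩, hadj.symm⟩⟩, rfl⟩
        · exact Or.inr ⟨d, rfl⟩
      · rintro (⟨v, ⟨hvT, x, ⟨y, hy, rfl⟩, hadj⟩, rfl⟩ | ⟨d, rfl⟩)
        · exact ⟨y, hy, Or.inl ⟨v, ⟨hvT, hadj.symm⟩, rfl⟩⟩
        · obtain ⟨y, hy⟩ := hsne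
          exact ⟨y, hy, Or.inr ⟨d, rfl⟩⟩
    have hcard : (s.biUnion t).card = (T ∩ nbhd G X).ncard + dd := by
      rw [hbi, Finset.card_union_of_disjoint, Finset.card_image_of_injective _ Sum.inl_injective,
        Finset.card_image_of_injective _ Sum.inr_injective, Finset.card_univ, Fintype.card_fin]
      · congr 1
        have := Set.ncard_coe_finset (Set.toFinite (T ∩ nbhd G X)).toFinset
        rw [Set.Finite.coe_toFinset] at this
        exact this.symm
      · simp only [Finset.disjoint_left, Finset.mem_image]
        rintro a ⟨v, _, rfl⟩ ⟨d, _, h⟩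
        exact Sum.inr_ne_inl h
    rw [hcard, ← hXcard]
    exact hdefbound X hXsub
  obtain ⟨φ, hφinj, hφt⟩ := (Finset.all_card_le_biUnion_card_iff_exists_injective t).mp hallcond
  haveI : Fintype ↥S := Fintype.ofFinite _
  set P : Finset ↥S := Finset.univ.filter (fun y => ∃ v, φ y = Sum.inl v) with hP
  set k := P.card with hk
  set en : Fin k ≃ ↥P := P.equivFin.symm with hen
  have hPmem : ∀ (y : ↥P), ∃ v, φ ↑y = Sum.inl v := fun y => (Finset.mem_filter.mp y.2).2
  set f : Fin k → V := fun i => ↑↑(en i) with hf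
  set g : Fin k → V := fun i => (hPmem (en i)).choose with hg
  have hφg : ∀ i, φ ↑(en i) = Sum.inl (g i) := fun i => (hPmem (en i)).choose_spec
  have hgT : ∀ i, g i ∈ T ∩ {a | G.Adj (f i) a} := by
    intro i
    have := hφt ↑(en i)
    rw [ht] at this
    simp only [Finset.mem_union, Finset.mem_image, Set.Finite.mem_toFinset] at this
    rcases this with ⟨v, hv, hveq⟩ | ⟨d, _, hdeq⟩
    · rw [hφg i] at hveq
      obtain rfl := Sum.inl_injective hveq
      exact hv
    · rw [hφg i] at hdeq
      exact absurd hdeq (by simp)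
  have hfS : ∀ i, f i ∈ S := fun i => (↑(en i) : ↥S).2
  have hadj : ∀ i, G.Adj (f i) (g i) := fun i => (hgT i).2
  have heninj : Function.Injective (fun i => (↑(en i) : ↥S)) := by
    intro i j hij
    exact en.injective (Subtype.ext hij)
  have hfinj : Function.Injective f := by
    intro i j hij
    exact heninj (Subtype.ext hij)
  have hginj : Function.Injective g := by
    intro i j hij
    apply heninj
    apply hφinj
    rw [hφg i, hφg j, hij]
  have hsuminj : Function.Injective (Sum.elim f g : (Fin k) ⊕ (Fin k) → V) := by
    rintro (i | i) (j | j) hij <;> simp only [Sum.elim_inl, Sum.elim_inr] at hij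
    · rw [hfinj hij]
    · exfalso
      apply Set.disjoint_left.mp hdisj (hfS i)
      rw [hij]; exact (hgT j).1
    · exfalso
      apply Set.disjoint_left.mp hdisj (hfS j)
      rw [← hij]; exact (hgT i).1
    · rw [hginj hij]
  -- k ≥ |S| - dd
  have hkbound : S.ncard ≤ k + dd := by
    have hcompl : (Finset.univ \ P).card ≤ dd := by
      have himg : (Finset.univ \ P).image φ ⊆ Finset.univ.image (Sum.inr : Fin dd → V ⊕ Fin dd) := by
        intro a ha
        simp only [Finset.mem_image, Finset.mem_sdiff, Finset.mem_univ, true_and] at ha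
        obtain ⟨y, hyP, rfl⟩ := ha
        rcases h : φ y with v | d
        · exact absurd (Finset.mem_filter.mpr ⟨Finset.mem_univ _, v, h⟩) hyP
        · simp only [Finset.mem_image, Finset.mem_univ, true_and]
          exact ⟨d, rfl⟩
      calc (Finset.univ \ P).card = ((Finset.univ \ P).image φ).card :=
            (Finset.card_image_of_injective _ hφinj).symm
        _ ≤ (Finset.univ.image (Sum.inr : Fin dd → V ⊕ Fin dd)).card := Finset.card_le_card himg
        _ = dd := by rw [Finset.card_image_of_injective _ Sum.inr_injective,
              Finset.card_univ, Fintype.card_fin]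
    have h1 : (Finset.univ \ P).card = Fintype.card ↥S - k := by
      rw [Finset.card_sdiff_of_subset (Finset.subset_univ P), Finset.card_univ]
    have h2 : k ≤ Fintype.card ↥S := by
      rw [← Finset.card_univ]
      exact Finset.card_le_card (Finset.subset_univ P)
    have h3 : Fintype.card ↥S = S.ncard := by
      rw [← Nat.card_eq_fintype_card, Nat.card_coe_set_eq]
    omega
  -- the independent set J
  set J : Set V := Xs ∪ (T \ nbhd G Xs) with hJ
  have hJsub : J ⊆ S ∪ T := by
    rintro v (hv | hv)
    · exact Or.inl (hXsS hv)
    · exact Or.inr hv.1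
  have hJindep : IsIndepSet G J := by
    rintro a (ha | ha) b (hb | hb) hadj'
    · exact hS (hXsS ha) (hXsS hb) hadj'
    · exact hb.2 ⟨a, ha, hadj'.symm⟩
    · exact ha.2 ⟨b, hb, hadj'⟩
    · exact hT ha.1 hb.1 hadj'
  have hJcard : J.ncard = Xs.ncard + (T.ncard - (T ∩ nbhd G Xs).ncard) := by
    rw [hJ, Set.ncard_union_eq ?_ (Set.toFinite _) (Set.toFinite _)]
    · congr 1
      rw [show T \ nbhd G Xs = T \ (T ∩ nbhd G Xs) by rw [Set.diff_self_inter]]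
      exact Set.ncard_diff Set.inter_subset_left (Set.toFinite _)
    · exact Set.disjoint_of_subset hXsS Set.diff_subset hdisj
  have hTcard : (T ∩ nbhd G Xs).ncard ≤ T.ncard :=
    Set.ncard_le_ncard Set.inter_subset_left (Set.toFinite _)
  exact ⟨J, k, f, g, hJsub, hJindep, hadj, hsuminj, hfS, fun i => (hgT i).1, by omega⟩

end HallApps

section Fact1

variable [Fintype V] {G : SimpleGraph V}

lemma closedNbhd_ncard {A : Set V} (hA : IsIndepSet G A) :
    (closedNbhd G A).ncard = A.ncard + (nbhd G A).ncard := by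
  rw [closedNbhd, Set.ncard_union_eq ?_ (Set.toFinite _) (Set.toFinite _)]
  rw [Set.disjoint_iff_inter_eq_empty]
  exact indep_inter_nbhd hA

/-- Fact 1: the unique odd cycle is disjoint from the closed neighbourhood of any critical
independent set. -/
lemma fact1 {u : V} {c : G.Walk u u} (hG : ¬ KonigEgervary G) (hc : IsUniqueOddCycle G c)
    {A : Set V} (hA : IsCritIndep G A) :
    {v | v ∈ c.support} ∩ closedNbhd G A = ∅ := by
  classical
  by_contra hne
  obtain ⟨x, hxc, hxA⟩ : ∃ x, x ∈ c.support ∧ x ∈ closedNbhd G A := by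
    rcases Set.eq_empty_or_nonempty ({v | v ∈ c.support} ∩ closedNbhd G A) with h | ⟨x, hx⟩
    · exact absurd h hne
    · exact ⟨x, hx.1, hx.2⟩
  set Y' : Set V := Set.univ \ closedNbhd G A with hY'
  -- no odd cycle supported in Y'
  have hnoodd : ∀ (w : V) (q : G.Walk w w), q.IsCycle → Odd q.length →
      ¬ (∀ y ∈ q.support, y ∈ Y') := by
    intro w q hq hodd hsupp
    have hedges := hc.2 w q ⟨hq, hodd⟩
    have hsub : ∀ e ∈ c.edges, e ∈ q.edges := by
      intro e he
      have : e ∈ {e | e ∈ c.edges} := he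
      rw [← hedges] at this
      exact this
    have hxq : x ∈ q.support :=
      support_subset_of_edges_subset hc.1.1.not_nil hsub x hxc
    exact (hsupp x hxq).2 hxA
  obtain ⟨S, T, hST, hSTdisj, hSindep, hTindep⟩ := exists_bipartition Y' hnoodd
  have hdisj : Disjoint S T := Set.disjoint_iff_inter_eq_empty.mpr hSTdisj
  obtain ⟨J, k, f, g, hJsub, hJindep, hadj, hsuminj, hfS, hgT, hcount⟩ :=
    bip_cover S T hdisj hSindep hTindep
  obtain ⟨φ, hφinj, hφprop⟩ := crit_hall hA
  -- region facts
  have hSY : S ⊆ Y' := hST ▸ Set.subset_union_left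
  have hTY : T ⊆ Y' := hST ▸ Set.subset_union_right
  have hnbhd_closed : nbhd G A ⊆ closedNbhd G A := Set.subset_union_right
  have hA_closed : A ⊆ closedNbhd G A := Set.subset_union_left
  have hYnotclosed : ∀ v ∈ Y', v ∉ closedNbhd G A := fun v hv => hv.2
  have hAnbhd : A ∩ nbhd G A = ∅ := indep_inter_nbhd hA.1
  -- the combined matching
  haveI : Fintype ↥(nbhd G A) := Fintype.ofFinite _
  set F : (↥(nbhd G A) ⊕ Fin k) → V := Sum.elim (fun y => ↑y) f with hF
  set G2 : (↥(nbhd G A) ⊕ Fin k) → V := Sum.elim (fun y => φ ↑y) g with hG2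
  have hFadj : ∀ i, G.Adj (F i) (G2 i) := by
    rintro (y | i)
    · exact (hφprop ↑y y.2).2
    · exact hadj i
  have hφA : ∀ (y : ↥(nbhd G A)), φ ↑y ∈ A := fun y => (hφprop ↑y y.2).1
  have hbiginj : Function.Injective (Sum.elim F G2 : _ ⊕ _ → V) := by
    have hfinj' : Function.Injective f := fun i j h => by
      have := hsuminj (a₁ := Sum.inl i) (a₂ := Sum.inl j) (by simpa using h)
      simpa using this
    have hginj' : Function.Injective g := fun i j h => by
      have := hsuminj (a₁ := Sum.inr i) (a₂ := Sum.inr j) (by simpa using h)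
      simpa using this
    have hfg' : ∀ i j, f i ≠ g j := fun i j h => by
      have := hsuminj (a₁ := Sum.inl i) (a₂ := Sum.inr j) (by simpa using h)
      simp at this
    rintro ((y1 | i1) | (y1 | i1)) ((y2 | i2) | (y2 | i2)) h <;>
      simp only [hF, hG2, Sum.elim_inl, Sum.elim_inr] at h
    · rw [Subtype.ext h]
    · exfalso; exact hYnotclosed _ (hSY (hfS i2)) (hnbhd_closed (h ▸ y1.2))
    · exfalso
      have : (↑y1 : V) ∈ A ∩ nbhd G A := ⟨h ▸ hφA y2, y1.2⟩
      rw [hAnbhd] at this; exact this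
    · exfalso; exact hYnotclosed _ (hTY (hgT i2)) (hnbhd_closed (h ▸ y1.2))
    · exfalso; exact hYnotclosed _ (hSY (hfS i1)) (hnbhd_closed (h ▸ y2.2))
    · rw [hfinj' h]
    · exfalso; exact hYnotclosed _ (hSY (hfS i1)) (hA_closed (h ▸ hφA y2))
    · exfalso; exact hfg' i1 i2 h
    · exfalso
      have : (↑y2 : V) ∈ A ∩ nbhd G A := ⟨h ▸ hφA y1, y2.2⟩
      rw [hAnbhd] at this; exact this
    · exfalso; exact hYnotclosed _ (hSY (hfS i2)) (hA_closed (h ▸ hφA y1))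
    · rw [Subtype.ext (hφinj y1.2 y2.2 h)]
    · exfalso; exact hYnotclosed _ (hTY (hgT i2)) (hA_closed (h ▸ hφA y1))
    · exfalso; exact hYnotclosed _ (hTY (hgT i1)) (hnbhd_closed (h ▸ y2.2))
    · exfalso; exact hfg' i2 i1 h.symm
    · exfalso; exact hYnotclosed _ (hTY (hgT i1)) (hA_closed (h ▸ hφA y2))
    · rw [hginj' h]
  have hmu : (nbhd G A).ncard + k ≤ matchNum G := by
    have := matchNum_ge F G2 hFadj hbiginj
    rwa [Fintype.card_sum, Fintype.card_fin, ← Nat.card_eq_fintype_card,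
      Nat.card_coe_set_eq] at this
  -- the independent set A ∪ J
  have hAJindep : IsIndepSet G (A ∪ J) := by
    have hJY : J ⊆ Y' := hST ▸ hJsub
    rintro a (ha | ha) b (hb | hb) hadj'
    · exact hA.1 ha hb hadj'
    · exact hYnotclosed b (hJY hb) (hnbhd_closed ⟨a, ha, hadj'.symm⟩)
    · exact hYnotclosed a (hJY ha) (hnbhd_closed ⟨b, hb, hadj'⟩)
    · exact hJindep ha hb hadj'
  have hAJdisj : Disjoint A J := by
    rw [Set.disjoint_left]
    intro a haA haJ
    exact hYnotclosed a ((hST ▸ hJsub) haJ) (hA_closed haA)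
  have halpha : A.ncard + J.ncard ≤ indepNum G := by
    have := indepNum_lower hAJindep
    rwa [Set.ncard_union_eq hAJdisj (Set.toFinite _) (Set.toFinite _)] at this
  -- cardinalities
  have hYcard : Y'.ncard = Fintype.card V - (closedNbhd G A).ncard := by
    rw [hY', Set.ncard_diff (Set.subset_univ _) (Set.toFinite _), Set.ncard_univ,
      Nat.card_eq_fintype_card]
  have hclosedle : (closedNbhd G A).ncard ≤ Fintype.card V := ncard_le_cardV _
  have hSTcard : S.ncard + T.ncard = Y'.ncard := by
    rw [← hST, Set.ncard_union_eq hdisj (Set.toFinite _) (Set.toFinite _)]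
  have hclosed : (closedNbhd G A).ncard = A.ncard + (nbhd G A).ncard := closedNbhd_ncard hA.1
  have hge : Fintype.card V ≤ indepNum G + matchNum G := by omega
  have hle := alpha_add_mu_le (G := G)
  apply hG
  rw [KonigEgervary, Nat.card_eq_fintype_card]
  omega

end Fact1

section Star

variable [Fintype V] {G : SimpleGraph V}

/-- property (*): every nonempty independent subset of `Y = V ∖ N[A]` has strictly more
neighbours inside `Y` than its size, when `A` is a maximum-cardinality critical set. -/
lemma star_property {A : Set V} (hA : IsCritIndep G A)
    (hmax : ∀ B : Set V, IsCritIndep G B → B.ncard ≤ A.ncard) :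
    ∀ I ⊆ (Set.univ \ closedNbhd G A), I.Nonempty → IsIndepSet G I →
      I.ncard + 1 ≤ ((Set.univ \ closedNbhd G A) ∩ nbhd G I).ncard := by
  intro I hIY hIne hIindep
  set Y := Set.univ \ closedNbhd G A with hY
  have hIA : Disjoint A I := by
    rw [Set.disjoint_left]
    intro a haA haI
    exact (hIY haI).2 (Set.subset_union_left haA)
  have hAIindep : IsIndepSet G (A ∪ I) := by
    rintro a (ha | ha) b (hb | hb) hadj
    · exact hA.1 ha hb hadj
    · exact (hIY hb).2 (Set.subset_union_right ⟨a, ha, hadj.symm⟩)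
    · exact (hIY ha).2 (Set.subset_union_right ⟨b, hb, hadj⟩)
    · exact hIindep ha hb hadj
  have hnbhd_sub : nbhd G (A ∪ I) ⊆ nbhd G A ∪ (Y ∩ nbhd G I) := by
    intro z hz
    rw [nbhd_union] at hz
    rcases hz with hz | hz
    · exact Or.inl hz
    · by_cases hzA : z ∈ nbhd G A
      · exact Or.inl hzA
      · refine Or.inr ⟨⟨Set.mem_univ _, ?_⟩, hz⟩
        rintro (hzA' | hzn)
        · obtain ⟨i, hi, hadj⟩ := hz
          exact (hIY hi).2 (Set.subset_union_right ⟨z, hzA', hadj.symm⟩)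
        · exact hzA hzn
  have c1 : (A ∪ I).ncard = A.ncard + I.ncard :=
    Set.ncard_union_eq hIA (Set.toFinite _) (Set.toFinite _)
  have c2 : (nbhd G (A ∪ I)).ncard ≤ (nbhd G A).ncard + (Y ∩ nbhd G I).ncard := by
    calc (nbhd G (A ∪ I)).ncard ≤ (nbhd G A ∪ (Y ∩ nbhd G I)).ncard :=
          Set.ncard_le_ncard hnbhd_sub (Set.toFinite _)
      _ ≤ _ := Set.ncard_union_le _ _
  have d1 : diffOf G (A ∪ I) ≤ diffOf G A := by
    rw [hA.2]; exact le_critDiff hAIindep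
  simp only [diffOf] at d1
  by_contra hcon
  push_neg at hcon
  -- then equality and A ∪ I is critical
  have heq : (Y ∩ nbhd G I).ncard = I.ncard := by omega
  have hcrit : IsCritIndep G (A ∪ I) := by
    refine ⟨hAIindep, le_antisymm (le_critDiff hAIindep) ?_⟩
    rw [← hA.2]
    simp only [diffOf]
    omega
  have := hmax _ hcrit
  rw [c1] at this
  have hI0 : I.ncard = 0 := by omega
  rw [Set.ncard_eq_zero (Set.toFinite _)] at hI0
  exact Set.not_nonempty_empty (hI0 ▸ hIne)

/-- generic Hall pairing between two vertex sets. -/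
lemma hall_pairing (P Q : Set V)
    (hcond : ∀ X, X ⊆ P → X.ncard ≤ (Q ∩ nbhd G X).ncard) :
    ∃ f : V → V, Set.InjOn f P ∧ ∀ x ∈ P, f x ∈ Q ∧ G.Adj x (f x) := by
  classical
  set t : ↥P → Finset V := fun y => (Set.toFinite (Q ∩ {a | G.Adj ↑y a})).toFinset with ht
  have hallcond : ∀ s : Finset ↥P, s.card ≤ (s.biUnion t).card := by
    intro s
    set X : Set V := Subtype.val '' (↑s : Set ↥P) with hX
    have hXsub : X ⊆ P := by rintro v ⟨y, _, rfl⟩; exact y.2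
    have hXcard : X.ncard = s.card := by
      rw [hX, Set.ncard_image_of_injective _ Subtype.val_injective, Set.ncard_coe_finset]
    have hbi : ↑(s.biUnion t) = Q ∩ nbhd G X := by
      ext a
      simp only [Finset.coe_biUnion, Set.mem_iUnion, Finset.mem_coe, Set.Finite.mem_toFinset,
        Set.mem_inter_iff, Set.mem_setOf_eq, ht]
      constructor
      · rintro ⟨y, hy, ha, hadj⟩
        exact ⟨ha, ↑y, ⟨y, hy, rfl⟩, hadj.symm⟩
      · rintro ⟨ha, x, ⟨y, hy, rfl⟩, hadj⟩
        exact ⟨y, hy, ha, hadj.symm⟩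
    have hbicard : (s.biUnion t).card = (Q ∩ nbhd G X).ncard := by
      rw [← hbi, Set.ncard_coe_finset]
    rw [hbicard, ← hXcard]
    exact hcond X hXsub
  obtain ⟨f, hfinj, hft⟩ := (Finset.all_card_le_biUnion_card_iff_exists_injective t).mp hallcond
  refine ⟨fun v => if h : v ∈ P then f ⟨v, h⟩ else v, ?_, ?_⟩
  · intro v1 h1 v2 h2 heq
    simp only [dif_pos h1, dif_pos h2] at heq
    exact Subtype.ext_iff.mp (hfinj heq)
  · intro y hy
    simp only [dif_pos hy]
    have := hft ⟨y, hy⟩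
    rw [ht, Set.Finite.mem_toFinset] at this
    exact ⟨this.1, this.2⟩

/-- a partner function (perfect matching) from a bijective adjacency pairing. -/
lemma pm_of_bij (D0 D1 : Set V) (hdisj : Disjoint D0 D1) (f : V → V)
    (hinj : Set.InjOn f D0) (hmap : ∀ x ∈ D0, f x ∈ D1 ∧ G.Adj x (f x))
    (hcard : D0.ncard = D1.ncard) :
    ∃ m : V → V, ∀ v ∈ D0 ∪ D1, m v ∈ D0 ∪ D1 ∧ m (m v) = v ∧ G.Adj v (m v) := by
  classical
  have himg : f '' D0 = D1 := by
    apply Set.eq_of_subset_of_ncard_le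
    · rintro y ⟨x, hx, rfl⟩; exact (hmap x hx).1
    · rw [Set.ncard_image_of_injOn hinj, hcard]
    · exact Set.toFinite _
  have hsurj : ∀ y ∈ D1, ∃ x ∈ D0, f x = y := by
    intro y hy
    rw [← himg] at hy
    obtain ⟨x, hx, hfx⟩ := hy
    exact ⟨x, hx, hfx⟩
  set m : V → V := fun v =>
    if hv : v ∈ D0 then f v else if hv1 : v ∈ D1 then (hsurj v hv1).choose else v with hm
  have hnotin : ∀ y ∈ D1, y ∉ D0 := fun y hy hy0 => Set.disjoint_left.mp hdisj hy0 hy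
  have hmD1 : ∀ y, (hy : y ∈ D1) → m y = (hsurj y hy).choose := by
    intro y hy
    rw [hm]
    simp only [dif_neg (hnotin y hy), dif_pos hy]
  have hmD0 : ∀ x, x ∈ D0 → m x = f x := by
    intro x hx
    rw [hm]; simp only [dif_pos hx]
  refine ⟨m, ?_⟩
  rintro v (hv | hv)
  · have h1 : m v = f v := hmD0 v hv
    have h2 : f v ∈ D1 := (hmap v hv).1
    refine ⟨h1 ▸ Or.inr h2, ?_, h1 ▸ (hmap v hv).2⟩
    rw [h1, hmD1 (f v) h2]
    have hspec := (hsurj (f v) h2).choose_spec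
    exact hinj hspec.1 hv hspec.2
  · have h1 : m v = (hsurj v hv).choose := hmD1 v hv
    have hspec := (hsurj v hv).choose_spec
    refine ⟨h1 ▸ Or.inl hspec.1, ?_, ?_⟩
    · rw [h1, hmD0 _ hspec.1, hspec.2]
    · rw [h1]
      have := (hmap _ hspec.1).2
      rw [hspec.2] at this
      exact this.symm
/-- extend a partner function by one extra matched pair. -/
lemma pm_extend {m : V → V} {D : Set V} (hm : ∀ v ∈ D, m v ∈ D ∧ m (m v) = v ∧ G.Adj v (m v))
    {x y : V} (hx : x ∉ D) (hy : y ∉ D) (hadj : G.Adj x y) :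
    ∃ m' : V → V, ∀ v ∈ D ∪ {x, y}, m' v ∈ D ∪ {x, y} ∧ m' (m' v) = v ∧ G.Adj v (m' v) := by
  classical
  have hxy : x ≠ y := G.ne_of_adj hadj
  set m' : V → V := fun v => if v = x then y else if v = y then x else m v with hm'
  refine ⟨m', ?_⟩
  have hmx' : m' x = y := by rw [hm']; simp
  have hmy' : m' y = x := by rw [hm']; simp [hxy.symm, hxy]
  rintro v (hv | hv)
  · have hvx : v ≠ x := fun h => hx (h ▸ hv)
    have hvy : v ≠ y := fun h => hy (h ▸ hv)
    have h1 : m' v = m v := by rw [hm']; simp [hvx, hvy]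
    obtain ⟨ha, hb, hc⟩ := hm v hv
    have hmvx : m v ≠ x := fun h => hx (h ▸ ha)
    have hmvy : m v ≠ y := fun h => hy (h ▸ ha)
    refine ⟨h1 ▸ Or.inl ha, ?_, h1 ▸ hc⟩
    rw [h1]
    have h2 : m' (m v) = m (m v) := by rw [hm']; simp [hmvx, hmvy]
    rw [h2, hb]
  · rcases hv with rfl | hv
    · exact ⟨hmx' ▸ Or.inr (Or.inr rfl), by rw [hmx', hmy'], hmx' ▸ hadj⟩
    · rcases hv with rfl
      exact ⟨hmy' ▸ Or.inr (Or.inl rfl), by rw [hmy', hmx'], hmy' ▸ hadj.symm⟩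

end Star

section PMExists

variable [Fintype V] {G : SimpleGraph V}

/-- within-`Y` neighbours of a subset of one side lie in the other side plus `v0`. -/
lemma side_nbhd {Y I0 I1 : Set V} {v0 : V}
    (hpart : I0 ∪ I1 = Y \ {v0}) (hI0 : IsIndepSet G I0) :
    ∀ X ⊆ I0, Y ∩ nbhd G X ⊆ (I1 ∩ nbhd G X) ∪ {v0} := by
  rintro X hXsub z ⟨hzY, hznb⟩
  by_cases hzv : z = v0
  · exact Or.inr hzv
  · have hz' : z ∈ I0 ∪ I1 := by rw [hpart]; exact ⟨hzY, hzv⟩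
    rcases hz' with hz' | hz'
    · exfalso
      obtain ⟨x, hx, hadj⟩ := hznb
      exact hI0 hz' (hXsub hx) hadj
    · exact Or.inl ⟨hz', hznb⟩

lemma side_sub {Y I0 I1 : Set V} {v0 : V} (hpart : I0 ∪ I1 = Y \ {v0}) : I0 ⊆ Y := by
  intro x hx
  have : x ∈ I0 ∪ I1 := Or.inl hx
  rw [hpart] at this
  exact this.1

lemma side_notmem {Y I0 I1 : Set V} {v0 : V} (hpart : I0 ∪ I1 = Y \ {v0}) : v0 ∉ I0 := by
  intro hx
  have : v0 ∈ I0 ∪ I1 := Or.inl hx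
  rw [hpart] at this
  exact this.2 rfl

/-- Hall condition for one side. -/
lemma side_NB {Y I0 I1 : Set V} {v0 : V}
    (hstar : ∀ I ⊆ Y, I.Nonempty → IsIndepSet G I → I.ncard + 1 ≤ (Y ∩ nbhd G I).ncard)
    (hpart : I0 ∪ I1 = Y \ {v0}) (hI0 : IsIndepSet G I0) :
    ∀ X ⊆ I0, X.ncard ≤ (I1 ∩ nbhd G X).ncard := by
  intro X hXsub
  rcases Set.eq_empty_or_nonempty X with rfl | hXne
  · simp
  have hXY : X ⊆ Y := fun x hx => side_sub hpart (hXsub hx)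
  have hXind : IsIndepSet G X := fun a ha b hb => hI0 (hXsub ha) (hXsub hb)
  have h1 := hstar X hXY hXne hXind
  have h2 : Y ∩ nbhd G X ⊆ (I1 ∩ nbhd G X) ∪ {v0} := side_nbhd hpart hI0 X hXsub
  have h3 : (Y ∩ nbhd G X).ncard ≤ (I1 ∩ nbhd G X).ncard + 1 := by
    calc (Y ∩ nbhd G X).ncard ≤ ((I1 ∩ nbhd G X) ∪ {v0}).ncard :=
          Set.ncard_le_ncard h2 (Set.toFinite _)
      _ ≤ (I1 ∩ nbhd G X).ncard + ({v0} : Set V).ncard := Set.ncard_union_le _ _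
      _ = (I1 ∩ nbhd G X).ncard + 1 := by rw [Set.ncard_singleton]
  omega

lemma side_nonempty {Y I0 I1 : Set V} {v0 : V}
    (hstar : ∀ I ⊆ Y, I.Nonempty → IsIndepSet G I → I.ncard + 1 ≤ (Y ∩ nbhd G I).ncard)
    (hY2 : 2 ≤ Y.ncard)
    (hpart : I0 ∪ I1 = Y \ {v0}) (hI0 : IsIndepSet G I0) (hI1 : IsIndepSet G I1) :
    I1.Nonempty := by
  rcases Set.eq_empty_or_nonempty I1 with h1 | h1
  · exfalso
    rcases Set.eq_empty_or_nonempty I0 with h0 | h0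
    · -- Y ⊆ {v0}
      have : Y \ {v0} = ∅ := by rw [← hpart, h0, h1, Set.union_empty]
      have hYsub : Y ⊆ {v0} := by
        intro y hy
        by_contra hyv
        have h2 : y ∈ (∅ : Set V) := by rw [← this]; exact ⟨hy, hyv⟩
        exact (Set.notMem_empty y) h2
      have := Set.ncard_le_ncard hYsub (Set.toFinite _)
      rw [Set.ncard_singleton] at this
      omega
    · have := side_NB hstar hpart hI0 I0 (le_refl _)
      rw [h1] at this
      simp only [Set.empty_inter, Set.ncard_empty] at this
      have h0' : I0.ncard ≠ 0 := by
        intro h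
        rw [Set.ncard_eq_zero (Set.toFinite _)] at h
        exact h0.ne_empty h
      omega
  · exact h1

lemma side_card_le {Y I0 I1 : Set V} {v0 : V}
    (hstar : ∀ I ⊆ Y, I.Nonempty → IsIndepSet G I → I.ncard + 1 ≤ (Y ∩ nbhd G I).ncard)
    (hpart : I0 ∪ I1 = Y \ {v0}) (hI0 : IsIndepSet G I0) :
    I0.ncard ≤ I1.ncard := by
  calc I0.ncard ≤ (I1 ∩ nbhd G I0).ncard := side_NB hstar hpart hI0 I0 (le_refl _)
    _ ≤ I1.ncard := Set.ncard_le_ncard Set.inter_subset_left (Set.toFinite _)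

lemma side_v0nbr {Y I0 I1 : Set V} {v0 : V}
    (hstar : ∀ I ⊆ Y, I.Nonempty → IsIndepSet G I → I.ncard + 1 ≤ (Y ∩ nbhd G I).ncard)
    (hY2 : 2 ≤ Y.ncard)
    (hpart : I0 ∪ I1 = Y \ {v0}) (hdisj : Disjoint I0 I1)
    (hI0 : IsIndepSet G I0) (hI1 : IsIndepSet G I1) :
    ∃ w ∈ I1, G.Adj v0 w := by
  have hpart' : I1 ∪ I0 = Y \ {v0} := by rw [Set.union_comm]; exact hpart
  have h1ne : I1.Nonempty := side_nonempty hstar hY2 hpart hI0 hI1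
  have hcards : I0.ncard = I1.ncard :=
    le_antisymm (side_card_le hstar hpart hI0) (side_card_le hstar hpart' hI1)
  have h1 := hstar I1 (side_sub hpart') h1ne hI1
  have h2 : Y ∩ nbhd G I1 ⊆ (I0 ∩ nbhd G I1) ∪ {v0} := side_nbhd hpart' hI1 I1 (le_refl _)
  by_cases hv : v0 ∈ nbhd G I1
  · obtain ⟨w, hw, hadj⟩ := hv
    exact ⟨w, hw, hadj⟩
  · exfalso
    have h3 : Y ∩ nbhd G I1 ⊆ I0 := by
      intro x hx
      rcases h2 hx with h' | h'
      · exact h'.1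
      · exact absurd (h' ▸ hx.2) hv
    have := Set.ncard_le_ncard h3 (Set.toFinite _)
    omega

/-- existence of partner functions on `Y \ {z}` for `z = v0` or `z` in the left class. -/
lemma pm_side {Y I0 I1 : Set V} {v0 : V} (hv0 : v0 ∈ Y)
    (hstar : ∀ I ⊆ Y, I.Nonempty → IsIndepSet G I → I.ncard + 1 ≤ (Y ∩ nbhd G I).ncard)
    (hY2 : 2 ≤ Y.ncard)
    (hpart : I0 ∪ I1 = Y \ {v0}) (hdisj : Disjoint I0 I1)
    (hI0 : IsIndepSet G I0) (hI1 : IsIndepSet G I1) :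
    ∀ z, (z = v0 ∨ z ∈ I0) →
      ∃ m : V → V, ∀ v ∈ Y \ {z}, m v ∈ Y \ {z} ∧ m (m v) = v ∧ G.Adj v (m v) := by
  classical
  have hpart' : I1 ∪ I0 = Y \ {v0} := by rw [Set.union_comm]; exact hpart
  have hcards : I0.ncard = I1.ncard :=
    le_antisymm (side_card_le hstar hpart hI0) (side_card_le hstar hpart' hI1)
  rintro z (rfl | hz)
  · -- z = v0 : perfect matching between I0 and I1
    obtain ⟨f, hfinj, hfprop⟩ := hall_pairing I0 I1 (side_NB hstar hpart hI0)
    obtain ⟨m, hm⟩ := pm_of_bij I0 I1 hdisj f hfinj (fun x hx => hfprop x hx) hcards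
    rw [hpart] at hm
    exact ⟨m, hm⟩
  · -- z ∈ I0
    have hzY : z ∈ Y := side_sub hpart hz
    have hznv0 : z ≠ v0 := by
      intro h
      exact side_notmem hpart (h ▸ hz)
    -- v0's neighbours in I1
    set W0 : Set V := I1 ∩ {a | G.Adj v0 a} with hW0
    have hW0ne : W0.Nonempty := by
      obtain ⟨w, hw, hadj⟩ := side_v0nbr hstar hY2 hpart hdisj hI0 hI1
      exact ⟨w, hw, hadj⟩
    -- there exists a good w1 ∈ W0 admitting a Hall pairing from I0 \ {z} to I1 \ {w1}
    have hgood : ∃ w1 ∈ W0, ∀ X ⊆ I0 \ {z}, X.ncard ≤ ((I1 \ {w1}) ∩ nbhd G X).ncard := by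
      by_contra hbad
      push_neg at hbad
      -- each w1 yields a tight set containing w1 in its neighbourhood
      have htight : ∀ w1 ∈ W0, ∃ X, X ⊆ I0 \ {z} ∧ (I1 ∩ nbhd G X).ncard ≤ X.ncard ∧
          w1 ∈ I1 ∩ nbhd G X := by
        intro w1 hw1
        obtain ⟨X, hXsub, hXlt⟩ := hbad w1 hw1
        have hXI0 : X ⊆ I0 := fun x hx => (hXsub hx).1
        have hNB := side_NB hstar hpart hI0 X hXI0
        have hw1mem : w1 ∈ I1 ∩ nbhd G X := by
          by_contra hw1n
          have : (I1 \ {w1}) ∩ nbhd G X = I1 ∩ nbhd G X := by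
            ext a
            simp only [Set.mem_inter_iff, Set.mem_diff, Set.mem_singleton_iff]
            constructor
            · rintro ⟨⟨h1, _⟩, h2⟩; exact ⟨h1, h2⟩
            · rintro ⟨h1, h2⟩
              refine ⟨⟨h1, ?_⟩, h2⟩
              rintro rfl
              exact hw1n ⟨h1, h2⟩
          rw [this] at hXlt
          omega
        have hkey : (I1 ∩ nbhd G X) \ {w1} ⊆ (I1 \ {w1}) ∩ nbhd G X := by
          rintro a ⟨⟨h1, h2⟩, h3⟩
          exact ⟨⟨h1, h3⟩, h2⟩
        have h5 : (I1 ∩ nbhd G X).ncard - 1 ≤ ((I1 \ {w1}) ∩ nbhd G X).ncard := by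
          have := Set.ncard_le_ncard hkey (Set.toFinite _)
          have h6 : ((I1 ∩ nbhd G X) \ {w1}).ncard = (I1 ∩ nbhd G X).ncard - 1 :=
            Set.ncard_diff_singleton_of_mem hw1mem
          omega
        exact ⟨X, hXsub, by omega, hw1mem⟩
      -- the union of all tight sets
      set F : Set (Set V) := {X | X ⊆ I0 \ {z} ∧ (I1 ∩ nbhd G X).ncard ≤ X.ncard} with hF
      set T : Set V := ⋃₀ F with hT
      have hTsub : T ⊆ I0 \ {z} := by
        rintro x ⟨X, hXF, hx⟩
        exact hXF.1 hx
      have hXT : ∀ X ∈ F, X ⊆ T := fun X hX => Set.subset_sUnion_of_mem hX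
      -- tightness of the union
      have hTtight : (I1 ∩ nbhd G T).ncard ≤ T.ncard := by
        have key : ∀ F' : Set (Set V), F'.Finite → F' ⊆ F →
            (I1 ∩ nbhd G (⋃₀ F')).ncard ≤ (⋃₀ F').ncard := by
          intro F' hF'fin
          refine Set.Finite.induction_on (motive := fun F' _ => F' ⊆ F →
            (I1 ∩ nbhd G (⋃₀ F')).ncard ≤ (⋃₀ F').ncard) F' hF'fin ?_ ?_
          · intro _
            simp [nbhd_empty]
          · intro X F'' hXF'' hF''fin IH hsubF
            have hXF : X ∈ F := hsubF (Set.mem_insert _ _)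
            have hIH := IH (fun Z hZ => hsubF (Set.mem_insert_of_mem _ hZ))
            rw [Set.sUnion_insert]
            set U : Set V := ⋃₀ F'' with hU
            have hXI0 : X ⊆ I0 := fun x hx => (hXF.1 hx).1
            have hUI0 : U ⊆ I0 := by
              rintro x ⟨Z, hZ, hx⟩
              exact ((hsubF (Set.mem_insert_of_mem _ hZ)).1 hx).1
            have a1 : I1 ∩ nbhd G (X ∪ U) = (I1 ∩ nbhd G X) ∪ (I1 ∩ nbhd G U) := by
              rw [nbhd_union, Set.inter_union_distrib_left]
            have a2 : ((I1 ∩ nbhd G X) ∪ (I1 ∩ nbhd G U)).ncard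
                + ((I1 ∩ nbhd G X) ∩ (I1 ∩ nbhd G U)).ncard
                = (I1 ∩ nbhd G X).ncard + (I1 ∩ nbhd G U).ncard :=
              Set.ncard_union_add_ncard_inter _ _ (Set.toFinite _) (Set.toFinite _)
            have a3 : I1 ∩ nbhd G (X ∩ U) ⊆ (I1 ∩ nbhd G X) ∩ (I1 ∩ nbhd G U) := by
              rintro a ⟨h1, h2⟩
              exact ⟨⟨h1, nbhd_mono Set.inter_subset_left h2⟩,
                ⟨h1, nbhd_mono Set.inter_subset_right h2⟩⟩
            have a3' : (I1 ∩ nbhd G (X ∩ U)).ncard ≤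
                ((I1 ∩ nbhd G X) ∩ (I1 ∩ nbhd G U)).ncard :=
              Set.ncard_le_ncard a3 (Set.toFinite _)
            have a4 : (X ∩ U).ncard ≤ (I1 ∩ nbhd G (X ∩ U)).ncard :=
              side_NB hstar hpart hI0 _ (fun x hx => hXI0 hx.1)
            have a5 : (X ∪ U).ncard + (X ∩ U).ncard = X.ncard + U.ncard :=
              Set.ncard_union_add_ncard_inter _ _ (Set.toFinite _) (Set.toFinite _)
            have a6 : (I1 ∩ nbhd G X).ncard ≤ X.ncard := hXF.2
            rw [a1]
            omega
        exact key F (Set.toFinite _) (le_refl _)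
      -- W0 ⊆ I1 ∩ nbhd T
      have hW0T : W0 ⊆ I1 ∩ nbhd G T := by
        intro w1 hw1
        obtain ⟨X, hXsub, hXtight, hw1mem⟩ := htight w1 hw1
        have hXF : X ∈ F := ⟨hXsub, hXtight⟩
        exact ⟨hw1mem.1, nbhd_mono (hXT X hXF) hw1mem.2⟩
      set NT : Set V := I1 ∩ nbhd G T with hNT
      set Q : Set V := I1 \ NT with hQ
      have hTcard : T.ncard ≤ I0.ncard - 1 := by
        have := Set.ncard_le_ncard hTsub (Set.toFinite _)
        have h2 : (I0 \ {z}).ncard = I0.ncard - 1 :=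
          Set.ncard_diff_singleton_of_mem hz
        omega
      have hI0pos : 1 ≤ I0.ncard := by
        rw [Nat.one_le_iff_ne_zero, Ne, Set.ncard_eq_zero (Set.toFinite _)]
        intro h
        exact absurd (h ▸ hz) (Set.notMem_empty z)
      have hQcard : Q.ncard = I1.ncard - NT.ncard := by
        rw [hQ]
        exact Set.ncard_diff (Set.inter_subset_left) (Set.toFinite _)
      have hNTcard : NT.ncard ≤ T.ncard := hTtight
      have hQne : Q.Nonempty := by
        have hq0 : Q.ncard ≠ 0 := by omega
        rcases Set.eq_empty_or_nonempty Q with h | h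
        · rw [h, Set.ncard_empty] at hq0; exact absurd rfl hq0
        · exact h
      have hQsub : Q ⊆ I1 := Set.diff_subset
      have hQY : Q ⊆ Y := fun x hx => side_sub hpart' (hQsub hx)
      have hQind : IsIndepSet G Q := fun a ha b hb => hI1 (hQsub ha) (hQsub hb)
      have hQstar := hstar Q hQY hQne hQind
      -- Y ∩ nbhd Q ⊆ I0 \ T
      have hQnbhd : Y ∩ nbhd G Q ⊆ I0 \ T := by
        intro y' hy'
        have h2 : Y ∩ nbhd G Q ⊆ (I0 ∩ nbhd G Q) ∪ {v0} := side_nbhd hpart' hI1 Q hQsub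
        rcases h2 hy' with h' | h'
        · refine ⟨h'.1, ?_⟩
          intro hy'T
          obtain ⟨q, hq, hadj⟩ := h'.2
          have : q ∈ NT := ⟨hQsub hq, y', hy'T, hadj.symm⟩
          exact hq.2 this
        · exfalso
          rcases h' with rfl
          obtain ⟨q, hq, hadj⟩ := hy'.2
          have : q ∈ W0 := ⟨hQsub hq, hadj⟩
          exact hq.2 (hW0T this)
      have h7 : (Y ∩ nbhd G Q).ncard ≤ (I0 \ T).ncard :=
        Set.ncard_le_ncard hQnbhd (Set.toFinite _)
      have hTI0 : T ⊆ I0 := fun x hx => (hTsub hx).1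
      have h8 : (I0 \ T).ncard = I0.ncard - T.ncard :=
        Set.ncard_diff hTI0 (Set.toFinite _)
      have hNTI1 : NT.ncard ≤ I1.ncard := Set.ncard_le_ncard Set.inter_subset_left (Set.toFinite _)
      omega
    -- with a good w1 we build the matching
    obtain ⟨w1, hw1W0, hw1good⟩ := hgood
    have hw1I1 : w1 ∈ I1 := hw1W0.1
    have hw1adj : G.Adj v0 w1 := hw1W0.2
    obtain ⟨f, hfinj, hfprop⟩ := hall_pairing (I0 \ {z}) (I1 \ {w1}) hw1good
    have hDdisj : Disjoint (I0 \ {z}) (I1 \ {w1}) :=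
      Set.disjoint_of_subset Set.diff_subset Set.diff_subset hdisj
    have hDcard : (I0 \ {z}).ncard = (I1 \ {w1}).ncard := by
      rw [Set.ncard_diff_singleton_of_mem hz,
        Set.ncard_diff_singleton_of_mem hw1I1, hcards]
    obtain ⟨m, hm⟩ := pm_of_bij (I0 \ {z}) (I1 \ {w1}) hDdisj f hfinj
      (fun x hx => hfprop x hx) hDcard
    have hv0notin : v0 ∉ (I0 \ {z}) ∪ (I1 \ {w1}) := by
      rintro (h | h)
      · exact side_notmem hpart h.1
      · exact side_notmem hpart' h.1
    have hw1notin : w1 ∉ (I0 \ {z}) ∪ (I1 \ {w1}) := by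
      rintro (h | h)
      · exact Set.disjoint_left.mp hdisj h.1 hw1I1
      · exact h.2 rfl
    obtain ⟨m', hm'⟩ := pm_extend hm hv0notin hw1notin hw1adj
    have hdom : ((I0 \ {z}) ∪ (I1 \ {w1})) ∪ {v0, w1} = Y \ {z} := by
      ext x
      constructor
      · rintro ((h | h) | h)
        · exact ⟨side_sub hpart h.1, h.2⟩
        · refine ⟨side_sub hpart' h.1, ?_⟩
          intro hxz
          exact Set.disjoint_left.mp hdisj (hxz ▸ hz) h.1
        · rcases h with rfl | h
          · exact ⟨hv0, hznv0.symm⟩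
          · rcases h with rfl
            refine ⟨side_sub hpart' hw1I1, ?_⟩
            intro hxz
            exact Set.disjoint_left.mp hdisj (hxz ▸ hz) hw1I1
      · rintro ⟨hxY, hxz⟩
        by_cases hxv0 : x = v0
        · exact Or.inr (Or.inl hxv0)
        · have : x ∈ I0 ∪ I1 := by rw [hpart]; exact ⟨hxY, hxv0⟩
          rcases this with h | h
          · exact Or.inl (Or.inl ⟨h, hxz⟩)
          · by_cases hxw1 : x = w1
            · exact Or.inr (Or.inr (by rw [hxw1]; rfl))
            · exact Or.inl (Or.inr ⟨h, hxw1⟩)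
    rw [hdom] at hm'
    exact ⟨m', hm'⟩

/-- every vertex of `Y` admits a partner function (perfect matching) on `Y` minus itself. -/
lemma pm_exists {Y I0 I1 : Set V} {v0 : V} (hv0 : v0 ∈ Y)
    (hstar : ∀ I ⊆ Y, I.Nonempty → IsIndepSet G I → I.ncard + 1 ≤ (Y ∩ nbhd G I).ncard)
    (hY2 : 2 ≤ Y.ncard)
    (hpart : I0 ∪ I1 = Y \ {v0}) (hdisj : Disjoint I0 I1)
    (hI0 : IsIndepSet G I0) (hI1 : IsIndepSet G I1) :
    ∀ z ∈ Y, ∃ m : V → V, ∀ v ∈ Y \ {z}, m v ∈ Y \ {z} ∧ m (m v) = v ∧ G.Adj v (m v) := by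
  intro z hzY
  by_cases hzv0 : z = v0
  · exact pm_side hv0 hstar hY2 hpart hdisj hI0 hI1 z (Or.inl hzv0)
  · have : z ∈ I0 ∪ I1 := by rw [hpart]; exact ⟨hzY, hzv0⟩
    rcases this with hz | hz
    · exact pm_side hv0 hstar hY2 hpart hdisj hI0 hI1 z (Or.inr hz)
    · have hpart' : I1 ∪ I0 = Y \ {v0} := by rw [Set.union_comm]; exact hpart
      exact pm_side hv0 hstar hY2 hpart' hdisj.symm hI1 hI0 z (Or.inr hz)

end PMExists

section Step3

variable [Fintype V] {G : SimpleGraph V}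

lemma edges_mapLe {G' : SimpleGraph V} (h : G ≤ G') {a b : V} (p : G.Walk a b) :
    (p.mapLe h).edges = p.edges := by
  unfold SimpleGraph.Walk.mapLe
  rw [Walk.edges_map]
  have hid : ∀ e : Sym2 V, Sym2.map (⇑(SimpleGraph.Hom.ofLE h)) e = e := by
    intro e
    induction e with
    | h x y => rfl
  calc List.map (Sym2.map (⇑(SimpleGraph.Hom.ofLE h))) p.edges
      = List.map id p.edges := List.map_congr_left (fun e _ => hid e)
    _ = p.edges := List.map_id _

lemma length_mapLe {G' : SimpleGraph V} (h : G ≤ G') {a b : V} (p : G.Walk a b) :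
    (p.mapLe h).length = p.length := Walk.length_map _ _

/-- edges of a partner function at a vertex. -/
lemma pm_edge_at {m : V → V} {D : Set V}
    (hm : ∀ v ∈ D, m v ∈ D ∧ m (m v) = v ∧ G.Adj v (m v))
    {e : Sym2 V} (he : e ∈ {e : Sym2 V | ∃ x ∈ D, e = s(x, m x)}) {v : V} (hv : v ∈ e) :
    v ∈ D ∧ e = s(v, m v) := by
  obtain ⟨x, hx, rfl⟩ := he
  rcases Sym2.mem_iff.mp hv with rfl | rfl
  · exact ⟨hx, rfl⟩
  · refine ⟨(hm x hx).1, ?_⟩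
    rw [(hm x hx).2.1]
    exact Sym2.eq_swap

/-- Step 3: from perfect matchings of `Y − z` and `Y − w` for adjacent `z, w ∈ Y`,
produce an odd cycle through `z`. -/
lemma step3 (Y : Set V) (z w : V) (hzY : z ∈ Y) (hwY : w ∈ Y) (hzw : G.Adj z w)
    (mz mw : V → V)
    (hmz : ∀ v ∈ Y \ {z}, mz v ∈ Y \ {z} ∧ mz (mz v) = v ∧ G.Adj v (mz v))
    (hmw : ∀ v ∈ Y \ {w}, mw v ∈ Y \ {w} ∧ mw (mw v) = v ∧ G.Adj v (mw v)) :
    ∃ (x : V) (q : G.Walk x x), q.IsCycle ∧ Odd q.length ∧ z ∈ q.support := by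
  classical
  have hzwne : z ≠ w := G.ne_of_adj hzw
  set Ez : Set (Sym2 V) := {e : Sym2 V | ∃ x ∈ Y \ {z}, e = s(x, mz x)} with hEz
  set Ew : Set (Sym2 V) := {e : Sym2 V | ∃ x ∈ Y \ {w}, e = s(x, mw x)} with hEw
  set Δ : Set (Sym2 V) := (Ez \ Ew) ∪ (Ew \ Ez) with hΔ
  have hznotEz : ∀ e ∈ Ez, z ∉ e := fun e he hz => ((pm_edge_at hmz he hz).1).2 rfl
  have hwnotEw : ∀ e ∈ Ew, w ∉ e := fun e he hw => ((pm_edge_at hmw he hw).1).2 rfl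
  set D : SimpleGraph V := {
    Adj := fun a b => G.Adj a b ∧ s(a, b) ∈ Δ
    symm := by
      constructor
      intro a b h
      exact ⟨h.1.symm, by rw [Sym2.eq_swap]; exact h.2⟩
    loopless := ⟨fun a ha => G.loopless.irrefl a ha.1⟩ } with hD
  have hDadj : ∀ {a b}, D.Adj a b ↔ G.Adj a b ∧ s(a, b) ∈ Δ := fun {a b} => Iff.rfl
  -- membership of partner edges of z and w
  have hzedge : D.Adj z (mw z) := by
    have hzmem : z ∈ Y \ {w} := ⟨hzY, hzwne⟩
    have h1 : s(z, mw z) ∈ Ew := ⟨z, hzmem, rfl⟩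
    have h2 : s(z, mw z) ∉ Ez := fun h => (hznotEz _ h) (by simp)
    exact hDadj.mpr ⟨(hmw z hzmem).2.2, Or.inr ⟨h1, h2⟩⟩
  -- the reachable set from z in D
  set S : Set V := {x | D.Reachable z x} with hS
  have hzS : z ∈ S := Reachable.refl z
  have hSclosed : ∀ a ∈ S, ∀ b, D.Adj a b → b ∈ S := by
    intro a ha b hab
    exact Reachable.trans ha (Adj.reachable hab)
  -- suppose w ∉ S; use handshake on the restriction of D to S
  have hwS : w ∈ S := by
    by_contra hwS
    set DS : SimpleGraph V := {
      Adj := fun a b => D.Adj a b ∧ a ∈ S ∧ b ∈ S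
      symm := by
        constructor
        intro a b h
        exact ⟨h.1.symm, h.2.2, h.2.1⟩
      loopless := ⟨fun a ha => D.loopless.irrefl a ha.1⟩ } with hDS
    letI : DecidableRel DS.Adj := Classical.decRel _
    -- neighbour set computations
    have hnz : DS.neighborFinset z = {mw z} := by
      ext b
      rw [mem_neighborFinset, Finset.mem_singleton]
      constructor
      · rintro ⟨⟨hadj, hΔb⟩, _, _⟩
        rcases hΔb with ⟨h1, _⟩ | ⟨h1, _⟩
        · exact absurd (by simp : z ∈ s(z, b)) (hznotEz _ h1)
        · have := pm_edge_at hmw h1 (by simp : z ∈ s(z, b))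
          exact Sym2.congr_right.mp this.2
      · rintro rfl
        exact ⟨hzedge, hzS, hSclosed z hzS _ hzedge⟩
    have hdegz : DS.degree z = 1 := by
      rw [degree, hnz, Finset.card_singleton]
    -- all other vertices of S have even degree
    have heven : ∀ v ∈ S, v ≠ z → Even (DS.degree v) := by
      intro v hvS hvz
      have hvw : v ≠ w := fun h => hwS (h ▸ hvS)
      by_cases hvY : v ∈ Y
      · have hvz' : v ∈ Y \ {z} := ⟨hvY, hvz⟩
        have hvw' : v ∈ Y \ {w} := ⟨hvY, hvw⟩
        by_cases hmm : mz v = mw v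
        · -- degree 0
          have hfin : DS.neighborFinset v = ∅ := by
            ext b
            rw [mem_neighborFinset]
            simp only [Finset.notMem_empty, iff_false]
            rintro ⟨⟨hadj, hΔb⟩, _, _⟩
            have hvmem : v ∈ s(v, b) := by simp
            rcases hΔb with ⟨h1, h2⟩ | ⟨h1, h2⟩
            · have := (pm_edge_at hmz h1 hvmem).2
              rw [this, hmm] at h2
              exact h2 ⟨v, hvw', rfl⟩
            · have := (pm_edge_at hmw h1 hvmem).2
              rw [this, ← hmm] at h2
              exact h2 ⟨v, hvz', rfl⟩
          rw [degree, hfin, Finset.card_empty]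
          exact ⟨0, rfl⟩
        · -- degree 0 or 2 : neighbours are exactly {mz v, mw v}
          have hsub : ∀ b, DS.Adj v b → b = mz v ∨ b = mw v := by
            rintro b ⟨⟨hadj, hΔb⟩, _, _⟩
            have hvmem : v ∈ s(v, b) := by simp
            rcases hΔb with ⟨h1, _⟩ | ⟨h1, _⟩
            · exact Or.inl (Sym2.congr_right.mp (pm_edge_at hmz h1 hvmem).2)
            · exact Or.inr (Sym2.congr_right.mp (pm_edge_at hmw h1 hvmem).2)
          by_cases hin : DS.Adj v (mz v)
          · have hsup : DS.neighborFinset v = {mz v, mw v} := by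
              ext b
              rw [mem_neighborFinset, Finset.mem_insert, Finset.mem_singleton]
              constructor
              · exact hsub b
              · rintro (rfl | rfl)
                · exact hin
                · have h1 : s(v, mw v) ∈ Ew := ⟨v, hvw', rfl⟩
                  have h2 : s(v, mw v) ∉ Ez := by
                    intro h
                    have := (pm_edge_at hmz h (by simp : v ∈ s(v, mw v))).2
                    exact hmm (Sym2.congr_right.mp this).symm
                  have hDadj' : D.Adj v (mw v) := hDadj.mpr ⟨(hmw v hvw').2.2, Or.inr ⟨h1, h2⟩⟩
                  exact ⟨hDadj', hvS, hSclosed v hvS _ hDadj'⟩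
            rw [degree, hsup, Finset.card_pair hmm]
            exact ⟨1, rfl⟩
          · -- then mw v is not a neighbour either, so degree 0
            have hsup : DS.neighborFinset v = ∅ := by
              ext b
              rw [mem_neighborFinset]
              simp only [Finset.notMem_empty, iff_false]
              intro hb
              rcases hsub b hb with rfl | rfl
              · exact hin hb
              · -- if mw v is a neighbour then mz v is too
                apply hin
                have h1 : s(v, mz v) ∈ Ez := ⟨v, hvz', rfl⟩
                have h2 : s(v, mz v) ∉ Ew := by
                  intro h
                  have := (pm_edge_at hmw h (by simp : v ∈ s(v, mz v))).2
                  exact hmm (Sym2.congr_right.mp this)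
                have hDadj' : D.Adj v (mz v) := hDadj.mpr ⟨(hmz v hvz').2.2, Or.inl ⟨h1, h2⟩⟩
                exact ⟨hDadj', hvS, hSclosed v hvS _ hDadj'⟩
            rw [degree, hsup, Finset.card_empty]
            exact ⟨0, rfl⟩
      · -- v ∉ Y : no Δ-edges at v at all
        have hfin : DS.neighborFinset v = ∅ := by
          ext b
          rw [mem_neighborFinset]
          simp only [Finset.notMem_empty, iff_false]
          rintro ⟨⟨hadj, hΔb⟩, _, _⟩
          have hvmem : v ∈ s(v, b) := by simp
          rcases hΔb with ⟨h1, _⟩ | ⟨h1, _⟩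
          · exact hvY (pm_edge_at hmz h1 hvmem).1.1
          · exact hvY (pm_edge_at hmw h1 hvmem).1.1
        rw [degree, hfin, Finset.card_empty]
        exact ⟨0, rfl⟩
    -- vertices outside S have degree 0
    have hout : ∀ v, v ∉ S → DS.degree v = 0 := by
      intro v hvS
      have hfin : DS.neighborFinset v = ∅ := by
        ext b
        rw [mem_neighborFinset]
        simp only [Finset.notMem_empty, iff_false]
        rintro ⟨_, hv, _⟩
        exact hvS hv
      rw [degree, hfin, Finset.card_empty]
    -- handshake contradiction
    have hhs := DS.even_card_odd_degree_vertices
    have : (Finset.univ.filter fun v => Odd (DS.degree v)) = {z} := by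
      ext v
      simp only [Finset.mem_filter, Finset.mem_univ, true_and, Finset.mem_singleton]
      constructor
      · intro hodd
        by_contra hvz
        by_cases hvS : v ∈ S
        · rcases heven v hvS hvz with ⟨k, hk⟩
          rw [hk] at hodd
          exact (Nat.not_even_iff_odd.mpr hodd) ⟨k, hk ▸ rfl⟩
        · rw [hout v hvS] at hodd
          simp at hodd
      · rintro rfl
        rw [hdegz]
        exact ⟨0, rfl⟩
    rw [this] at hhs
    simp at hhs
  -- get a path from z to w in D
  have hreach : D.Reachable z w := hwS
  obtain ⟨p0⟩ := hreach
  set q : D.Walk z w := ↑p0.toPath with hq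
  have hqpath : (q : D.Walk z w).IsPath := p0.toPath.2
  have hqnnil : ¬ (q : D.Walk z w).Nil := by
    intro h
    rw [Walk.nil_iff_length_eq] at h
    exact hzwne (Walk.eq_of_length_eq_zero h)
  -- alternation lemma
  have alt : ∀ (n : ℕ) {b : V} (p : D.Walk b w), p.length = n → p.IsTrail →
      ∀ {a : V} (h : D.Adj a b), (Walk.cons h p).IsTrail →
      ((s(a, b) ∈ Ez → Odd (Walk.cons h p).length) ∧
       (s(a, b) ∈ Ew → Even (Walk.cons h p).length)) := by
    intro n
    induction n using Nat.strong_induction_on with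
    | _ n IH =>
      intro b p hlen htrail a h hconstrail
      by_cases hnil : p.Nil
      · have hlen0 : p.length = 0 := Walk.nil_iff_length_eq.mp hnil
        constructor
        · intro _
          rw [Walk.length_cons, hlen0]
          exact ⟨0, rfl⟩
        · intro hmem
          have hbw : b = w := Walk.eq_of_length_eq_zero hlen0
          subst hbw
          exact absurd (by simp : b ∈ s(a, b)) (hwnotEw _ hmem)
      · obtain ⟨c, h', p', rfl⟩ := Walk.not_nil_iff.mp hnil
        have he1Δ : s(b, c) ∈ Δ := h'.2
        have hne : s(a, b) ≠ s(b, c) := by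
          have := hconstrail.1
          rw [Walk.edges_cons, Walk.edges_cons, List.nodup_cons] at this
          intro heq
          exact this.1 (heq ▸ List.mem_cons_self)
        have hbmem1 : b ∈ s(a, b) := by simp
        have hbmem2 : b ∈ s(b, c) := by simp
        have hlt : p'.length < n := by
          rw [Walk.length_cons] at hlen
          omega
        have ihspec := IH p'.length hlt p' rfl htrail.of_cons h' htrail
        constructor
        · intro hEz0
          have he1Ew : s(b, c) ∈ Ew := by
            rcases he1Δ with ⟨h1, _⟩ | ⟨h1, _⟩
            · exfalso
              have e0 := (pm_edge_at hmz hEz0 hbmem1).2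
              have e1 := (pm_edge_at hmz h1 hbmem2).2
              exact hne (e0.trans e1.symm)
            · exact h1
          obtain ⟨k, hk⟩ := ihspec.2 he1Ew
          rw [Walk.length_cons]
          exact ⟨k, by omega⟩
        · intro hEw0
          have he1Ez : s(b, c) ∈ Ez := by
            rcases he1Δ with ⟨h1, _⟩ | ⟨h1, _⟩
            · exact h1
            · exfalso
              have e0 := (pm_edge_at hmw hEw0 hbmem1).2
              have e1 := (pm_edge_at hmw h1 hbmem2).2
              exact hne (e0.trans e1.symm)
          obtain ⟨k, hk⟩ := ihspec.1 he1Ez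
          rw [Walk.length_cons]
          exact ⟨k + 1, by omega⟩
  -- the path has even length
  have hqeven : Even (q : D.Walk z w).length := by
    obtain ⟨x, hadj, q', hq'⟩ := Walk.not_nil_iff.mp hqnnil
    have htrail : (Walk.cons hadj q').IsTrail := hq' ▸ hqpath.isTrail
    have hEw0 : s(z, x) ∈ Ew := by
      have hΔ0 : s(z, x) ∈ Δ := hadj.2
      rcases hΔ0 with ⟨h1, _⟩ | ⟨h1, _⟩
      · exact absurd (by simp : z ∈ s(z, x)) (hznotEz _ h1)
      · exact h1
    have := (alt q'.length q' rfl (htrail.of_cons) hadj htrail).2 hEw0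
    rw [hq']
    exact this
  -- map to G and close up
  have hle : D ≤ G := fun a b hab => hab.1
  set pg : G.Walk z w := Walk.mapLe hle (q : D.Walk z w) with hpg
  have hpgpath : pg.IsPath := (Walk.mapLe_isPath hle).mpr hqpath
  have hwz : G.Adj w z := hzw.symm
  have hedge_not : s(w, z) ∉ pg.edges := by
    rw [hpg, edges_mapLe]
    intro hmem
    have hΔe : s(w, z) ∈ Δ := ((q : D.Walk z w).edges_subset_edgeSet hmem : _).2
    rcases hΔe with ⟨h1, _⟩ | ⟨h1, _⟩
    · exact (hznotEz _ h1) (by simp)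
    · exact (hwnotEw _ h1) (by simp)
  set cyc : G.Walk w w := Walk.cons hwz pg with hcyc
  have hcyccycle : cyc.IsCycle := (Walk.cons_isCycle_iff pg hwz).mpr ⟨hpgpath, hedge_not⟩
  have hcycodd : Odd cyc.length := by
    rw [hcyc, Walk.length_cons, hpg, length_mapLe]
    obtain ⟨k, hk⟩ := hqeven
    exact ⟨k, by omega⟩
  refine ⟨w, cyc, hcyccycle, hcycodd, ?_⟩
  rw [hcyc, Walk.support_cons]
  exact List.mem_cons_of_mem _ (by rw [hpg]; exact Walk.start_mem_support _)

end Step3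

end ABPAux

/-- If `G` is an almost bipartite non-König-Egerváry graph with unique odd cycle `c`, then
`V(C) ∪ N[diadem G] = V(G)`; consequently `{V(C), N[diadem G]}` is a partition of `V(G)`. -/
theorem stmt3 {V : Type*} [Fintype V] (G : SimpleGraph V) (hG : ¬ KonigEgervary G)
    (u : V) (c : G.Walk u u) (hc : IsUniqueOddCycle G c) :
    {v | v ∈ c.support} ∪ closedNbhd G (diadem G) = Set.univ ∧
    {v | v ∈ c.support} ∩ closedNbhd G (diadem G) = ∅ := by
  classical
  obtain ⟨A, hAcrit, hAmax⟩ := ABPAux.exists_max_crit (G := G)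
  set VC : Set V := {v | v ∈ c.support} with hVC
  have hfact : ∀ A' : Set V, IsCritIndep G A' → VC ∩ closedNbhd G A' = ∅ :=
    fun A' hA' => ABPAux.fact1 hG hc hA'
  set Y : Set V := Set.univ \ closedNbhd G A with hY
  have hVCY : VC ⊆ Y := by
    intro x hx
    refine ⟨Set.mem_univ _, fun hxA => ?_⟩
    have hmem : x ∈ VC ∩ closedNbhd G A := ⟨hx, hxA⟩
    rw [hfact A hAcrit] at hmem
    exact hmem
  have hstar : ∀ I ⊆ Y, I.Nonempty → IsIndepSet G I →
      I.ncard + 1 ≤ (Y ∩ nbhd G I).ncard := ABPAux.star_property hAcrit hAmax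
  have hcnnil : ¬ c.Nil := hc.1.1.not_nil
  have huVC : u ∈ VC := c.start_mem_support
  obtain ⟨x0, hadjux0, c', hc'eq⟩ := SimpleGraph.Walk.not_nil_iff.mp hcnnil
  have hx0VC : x0 ∈ VC := by
    rw [hVC]
    show x0 ∈ c.support
    rw [hc'eq, SimpleGraph.Walk.support_cons]
    exact List.mem_cons_of_mem _ c'.start_mem_support
  have hux0 : u ≠ x0 := G.ne_of_adj hadjux0
  have hY2 : 2 ≤ Y.ncard := by
    have hsub : ({u, x0} : Set V) ⊆ Y := by
      rintro y (rfl | rfl)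
      · exact hVCY huVC
      · exact hVCY hx0VC
    calc 2 = ({u, x0} : Set V).ncard := (Set.ncard_pair hux0).symm
      _ ≤ Y.ncard := Set.ncard_le_ncard hsub (Set.toFinite _)
  -- bipartition of Y \ {u}
  have hnoodd : ∀ (w : V) (q : G.Walk w w), q.IsCycle → Odd q.length →
      ¬ (∀ x ∈ q.support, x ∈ Y \ {u}) := by
    intro w q hq hodd hsupp
    have hedges := hc.2 w q ⟨hq, hodd⟩
    obtain ⟨e, he, hue⟩ := ABPAux.exists_edge_of_mem_support c hcnnil u huVC
    have heq : e ∈ q.edges := by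
      have : e ∈ {e | e ∈ c.edges} := he
      rw [← hedges] at this
      exact this
    have huq : u ∈ q.support := by
      induction e with
      | h x y =>
        rcases Sym2.mem_iff.mp hue with rfl | rfl
        · exact q.fst_mem_support_of_mem_edges heq
        · exact q.snd_mem_support_of_mem_edges heq
    exact (hsupp u huq).2 rfl
  obtain ⟨I0, I1, hpart, hdisj0, hI0, hI1⟩ := ABPAux.exists_bipartition (Y \ {u}) hnoodd
  have hdisj : Disjoint I0 I1 := Set.disjoint_iff_inter_eq_empty.mpr hdisj0
  have hv0Y : u ∈ Y := hVCY huVC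
  -- Y ⊆ VC
  have hYVC : Y ⊆ VC := by
    intro z hzY
    by_contra hzVC
    have hzsingle : ({z} : Set V).ncard + 1 ≤ (Y ∩ nbhd G {z}).ncard := by
      refine hstar {z} ?_ ⟨z, rfl⟩ ?_
      · intro a ha
        rw [Set.mem_singleton_iff] at ha
        exact ha ▸ hzY
      · intro a ha b hb hadj
        rw [Set.mem_singleton_iff] at ha hb
        subst ha; subst hb
        exact G.loopless.irrefl _ hadj
    rw [Set.ncard_singleton] at hzsingle
    have hne : (Y ∩ nbhd G {z}).Nonempty := by
      rcases Set.eq_empty_or_nonempty (Y ∩ nbhd G {z}) with h | h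
      · rw [h, Set.ncard_empty] at hzsingle; omega
      · exact h
    obtain ⟨w, hwY, hwnb⟩ := hne
    obtain ⟨x, hxz, hadj⟩ := hwnb
    rw [Set.mem_singleton_iff] at hxz
    rw [hxz] at hadj
    have hzw : G.Adj z w := hadj.symm
    obtain ⟨mz, hmz⟩ := ABPAux.pm_exists hv0Y hstar hY2 hpart hdisj hI0 hI1 z hzY
    obtain ⟨mw, hmw⟩ := ABPAux.pm_exists hv0Y hstar hY2 hpart hdisj hI0 hI1 w hwY
    obtain ⟨x', q, hqcyc, hqodd, hzq⟩ := ABPAux.step3 Y z w hzY hwY hzw mz mw hmz hmw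
    have hedges := hc.2 x' q ⟨hqcyc, hqodd⟩
    obtain ⟨e, he, hze⟩ := ABPAux.exists_edge_of_mem_support q hqcyc.not_nil z hzq
    have hec : e ∈ c.edges := by
      have : e ∈ {e | e ∈ q.edges} := he
      rw [hedges] at this
      exact this
    have hzc : z ∈ c.support := by
      induction e with
      | h x y =>
        rcases Sym2.mem_iff.mp hze with rfl | rfl
        · exact c.fst_mem_support_of_mem_edges hec
        · exact c.snd_mem_support_of_mem_edges hec
    exact hzVC hzc
  have hAdia : A ⊆ diadem G := fun a ha => ⟨A, hAcrit, ha⟩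
  have hmono : closedNbhd G A ⊆ closedNbhd G (diadem G) := by
    rintro y (h | h)
    · exact Or.inl (hAdia h)
    · exact Or.inr (ABPAux.nbhd_mono hAdia h)
  constructor
  · ext v
    simp only [Set.mem_union, Set.mem_univ, iff_true]
    by_cases hv : v ∈ closedNbhd G (diadem G)
    · exact Or.inr hv
    · left
      have hvY : v ∈ Y := ⟨Set.mem_univ _, fun hvA => hv (hmono hvA)⟩
      exact hYVC hvY
  · ext v
    simp only [Set.mem_inter_iff, Set.mem_empty_iff_false, iff_false, not_and]
    intro hvc hvd
    rcases hvd with hvd | hvd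
    · obtain ⟨A', hA', hvA'⟩ := hvd
      have hmem : v ∈ VC ∩ closedNbhd G A' := ⟨hvc, Or.inl hvA'⟩
      rw [hfact A' hA'] at hmem
      exact hmem
    · obtain ⟨x, hxdia, hadj⟩ := hvd
      obtain ⟨A', hA', hxA'⟩ := hxdia
      have hmem : v ∈ VC ∩ closedNbhd G A' := ⟨hvc, Or.inr ⟨x, hxA', hadj⟩⟩
      rw [hfact A' hA'] at hmem
      exact hmem
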